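/- arXiv:2401.14138 — 4 statements merged into one kernel-verified Lean document; each statement's English description precedes it below -/
import Mathlib

section
/- Fix a positive integer m and let q be a prime with q > m, gcd(q,m) = 1, and mq ≡ 1 (mod 4). If the rational numbers X(m) and Y(m) both have q-adic valuation 0 (i.e., q divides neither the numerator nor denominator of X(m) or of Y(m)), then the discriminant of F_{mq}(x) is not the square of a rational number. -/
open Polynomial BigOperators

/-- `F n` is the truncated logarithmic polynomial `1 + x + x²/2 + ⋯ + xⁿ/n ∈ ℚ[x]`. -/
noncomputable def F (n : ℕ) : Polynomial ℚ :=
  1 + ∑ k ∈ Finset.Icc 1 n, Polynomial.C ((k : ℚ)⁻¹) * Polynomial.X ^ k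

/-- `Ln n = lcm {1, 2, …, n}`. -/
def Ln (n : ℕ) : ℕ := (Finset.Icc 1 n).lcm id

/-- `Ftilde n = Ln n • F n`, a polynomial with integer coefficients. -/
noncomputable def Ftilde (n : ℕ) : Polynomial ℚ := Polynomial.C ((Ln n : ℚ)) * F n

/-- The resultant `Res(P, Q)` of two polynomials over `ℚ`, computed in `ℂ` via the
product formula `Res(P,Q) = lc(P)^(deg Q) * ∏_{P(r)=0} Q(r)` (roots with multiplicity). -/
noncomputable def resC (P Q : Polynomial ℚ) : ℂ :=
  ((P.leadingCoeff : ℂ)) ^ Q.natDegree *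
    ((P.map (algebraMap ℚ ℂ)).roots.map (fun r => (Q.map (algebraMap ℚ ℂ)).eval r)).prod

/-- The discriminant `disc P = (−1)^(n(n−1)/2) ⬝ a_n⁻¹ ⬝ Res(P, P′)`, as a complex number. -/
noncomputable def discC (P : Polynomial ℚ) : ℂ :=
  (-1) ^ (P.natDegree.choose 2) * ((P.leadingCoeff : ℂ))⁻¹ * resC P (Polynomial.derivative P)

/-- `𝒫 n = ∏_θ F̃_n(θ)`, the product over the nontrivial `n`-th roots of unity in `ℂ`. -/
noncomputable def P (n : ℕ) : ℂ :=
  ∏ θ ∈ (Polynomial.nthRootsFinset n (1 : ℂ)).erase 1, (Polynomial.aeval θ) (Ftilde n)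

/-- `Xc m ω = ∏_{k=1}^{m−1} (1/m + ω^k + ω^{2k}/2 + ⋯ + ω^{(m−1)k}/(m−1))`. -/
noncomputable def Xc (m : ℕ) (ω : ℂ) : ℂ :=
  ∏ k ∈ Finset.Icc 1 (m - 1), ((m : ℂ)⁻¹ + ∑ j ∈ Finset.Icc 1 (m - 1), ω ^ (j * k) / (j : ℂ))

/-- `Y m = 1 + 1/2 + ⋯ + 1/m ∈ ℚ`. -/
def Y (m : ℕ) : ℚ := ∑ j ∈ Finset.Icc 1 m, (j : ℚ)⁻¹




noncomputable def D (n : ℕ) : Polynomial ℚ := ∑ j ∈ Finset.range n, Polynomial.X ^ j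

lemma derivative_F (n : ℕ) : derivative (F n) = D n := by
  rw [F, D, derivative_add, derivative_one, zero_add, derivative_sum]
  rw [Finset.sum_nbij' (i := fun k => k - 1) (j := fun j => j + 1)]
  · intro k hk; simp only [Finset.mem_Icc] at hk; simp only [Finset.mem_range]; omega
  · intro j hj; simp only [Finset.mem_range] at hj; simp only [Finset.mem_Icc]; omega
  · intro k hk; simp only [Finset.mem_Icc] at hk; omega
  · intro j hj; omega
  · intro k hk
    simp only [Finset.mem_Icc] at hk
    have hk0 : (k : ℚ) ≠ 0 := Nat.cast_ne_zero.mpr (by omega)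
    rw [derivative_C_mul, derivative_X_pow, ← mul_assoc, ← C_mul,
      inv_mul_cancel₀ hk0, C_1, one_mul]

lemma F_coeff_n {n : ℕ} (hn : 0 < n) : (F n).coeff n = (n : ℚ)⁻¹ := by
  rw [F, coeff_add, coeff_one, if_neg (by omega), zero_add, finset_sum_coeff]
  rw [Finset.sum_eq_single n]
  · simp
  · intro k hk hkn
    simp only [coeff_C_mul, coeff_X_pow, if_neg (fun h : n = k => hkn h.symm), mul_zero]
  · intro h; exact absurd (Finset.mem_Icc.mpr ⟨hn, le_refl n⟩) h

lemma F_natDegree {n : ℕ} (hn : 0 < n) : (F n).natDegree = n := by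
  have h1 : (F n).natDegree ≤ n := by
    rw [F]
    refine (natDegree_add_le _ _).trans (max_le (by simp) ?_)
    refine (natDegree_sum_le _ _).trans ?_
    rw [Finset.fold_max_le]
    refine ⟨Nat.zero_le n, fun k hk => ?_⟩
    simp only [Finset.mem_Icc] at hk
    exact (natDegree_C_mul_le _ _).trans (by simp [hk.2])
  have h2 : n ≤ (F n).natDegree :=
    le_natDegree_of_ne_zero (by rw [F_coeff_n hn]; positivity)
  omega

lemma F_leadingCoeff {n : ℕ} (hn : 0 < n) : (F n).leadingCoeff = (n : ℚ)⁻¹ := by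
  rw [leadingCoeff, F_natDegree hn, F_coeff_n hn]

lemma F_ne_zero {n : ℕ} (hn : 0 < n) : F n ≠ 0 := by
  intro h
  have := F_leadingCoeff hn
  rw [h, leadingCoeff_zero] at this
  exact (Nat.cast_ne_zero.mpr hn.ne' : (n:ℚ) ≠ 0) (by simpa using this.symm)

lemma D_coeff {n : ℕ} (hn : 0 < n) : (D n).coeff (n-1) = 1 := by
  rw [D, finset_sum_coeff, Finset.sum_eq_single (n-1)]
  · simp
  · intro k hk hkn; rw [coeff_X_pow, if_neg (fun h : n-1 = k => hkn h.symm)]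
  · intro h; exact absurd (Finset.mem_range.mpr (by omega)) h

lemma D_natDegree {n : ℕ} (hn : 0 < n) : (D n).natDegree = n - 1 := by
  have h1 : (D n).natDegree ≤ n - 1 := by
    rw [D]
    refine (natDegree_sum_le _ _).trans ?_
    rw [Finset.fold_max_le]
    exact ⟨Nat.zero_le _, fun k hk => by simp only [Finset.mem_range] at hk; simp; omega⟩
  have h2 : n - 1 ≤ (D n).natDegree :=
    le_natDegree_of_ne_zero (by rw [D_coeff hn]; exact one_ne_zero)
  omega

lemma D_monic {n : ℕ} (hn : 0 < n) : (D n).Monic := by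
  rw [Monic, leadingCoeff, D_natDegree hn, D_coeff hn]

lemma X_sub_one_mul_D (n : ℕ) : (D n) * (X - 1) = X ^ n - 1 := by
  rw [D]; exact geom_sum_mul X n

-- generic multiset lemmas
lemma ms_prod_comm {α : Type*} [CommMonoid α] (M N : Multiset α) (f : α → α → α) :
    (M.map fun r => (N.map fun t => f r t).prod).prod
      = (N.map fun t => (M.map fun r => f r t).prod).prod := by
  induction M using Multiset.induction_on with
  | empty => simp
  | cons a M ih =>
    simp only [Multiset.map_cons, Multiset.prod_cons, ih, ← Multiset.prod_map_mul]

lemma ms_prod_neg {R : Type*} [CommRing R] (N : Multiset R) (r : R) :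
    (N.map fun t => r - t).prod = (-1) ^ Multiset.card N * (N.map fun t => t - r).prod := by
  have : (N.map fun t => r - t) = N.map fun t => (-1) * (t - r) := by
    apply Multiset.map_congr rfl; intro t _; ring
  rw [this, Multiset.prod_map_mul, Multiset.map_const', Multiset.prod_replicate]


lemma ms_prod_map_mul_const {R : Type*} [CommRing R] (M : Multiset R) (c : R) (g : R → R) :
    (M.map fun t => c * g t).prod = c ^ Multiset.card M * (M.map g).prod := by
  rw [Multiset.prod_map_mul (f := fun _ => c) (g := g), Multiset.map_const', Multiset.prod_replicate]

lemma resC_eq (n : ℕ) (hn : 0 < n) :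
    resC (F n) (derivative (F n)) =
      ((((D n).map (algebraMap ℚ ℂ)).roots).map
        (fun t => (((F n).map (algebraMap ℚ ℂ))).eval t)).prod := by
  set FC := (F n).map (algebraMap ℚ ℂ) with hFCdef
  set DC := (D n).map (algebraMap ℚ ℂ) with hDCdef
  have hsF : FC.Splits :=
    IsAlgClosed.splits _
  have hsD : DC.Splits :=
    IsAlgClosed.splits _
  have cardF : Multiset.card FC.roots = n := by
    rw [← hsF.natDegree_eq_card_roots, hFCdef,
      natDegree_map, F_natDegree hn]
  have cardD : Multiset.card DC.roots = n - 1 := by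
    rw [← hsD.natDegree_eq_card_roots, hDCdef,
      natDegree_map, D_natDegree hn]
  have hFfact : FC = C FC.leadingCoeff * (FC.roots.map fun a => X - C a).prod :=
    hsF.eq_prod_roots
  have hDfact : DC = (DC.roots.map fun a => X - C a).prod := by
    have h := hsD.eq_prod_roots
    rwa [Monic.leadingCoeff ((D_monic hn).map _), map_one, one_mul] at h
  set lc : ℂ := FC.leadingCoeff with hlc
  have evD : ∀ r : ℂ, DC.eval r = (DC.roots.map fun t => r - t).prod := by
    intro r
    conv_lhs => rw [hDfact]
    rw [eval_multiset_prod, Multiset.map_map]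
    simp
  have evF : ∀ t : ℂ, FC.eval t = lc * (FC.roots.map fun r => t - r).prod := by
    intro t
    conv_lhs => rw [hFfact]
    rw [eval_mul, eval_C, eval_multiset_prod, Multiset.map_map]
    simp
  have hlcq : ((F n).leadingCoeff : ℂ) = lc := by
    rw [hlc, hFCdef, leadingCoeff_map]
    norm_cast
  rw [resC, derivative_F, hlcq, D_natDegree hn]
  calc lc ^ (n-1) * (FC.roots.map fun r => DC.eval r).prod
      = lc ^ (n-1) * (FC.roots.map fun r => (DC.roots.map fun t => r - t).prod).prod := by
        congr 1; exact congrArg _ (Multiset.map_congr rfl fun r _ => evD r)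
    _ = lc ^ (n-1) * (FC.roots.map fun r =>
          (-1:ℂ) ^ (n-1) * (DC.roots.map fun t => t - r).prod).prod := by
        congr 1; refine congrArg _ (Multiset.map_congr rfl fun r _ => ?_)
        rw [ms_prod_neg, cardD]
    _ = lc ^ (n-1) * (((-1:ℂ) ^ (n-1)) ^ n *
          (FC.roots.map fun r => (DC.roots.map fun t => t - r).prod).prod) := by
        rw [ms_prod_map_mul_const, cardF]
    _ = lc ^ (n-1) * (FC.roots.map fun r => (DC.roots.map fun t => t - r).prod).prod := by
        rw [← pow_mul, (Even.neg_one_pow ?_ : ((-1:ℂ) ^ ((n-1)*n)) = 1), one_mul]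
        have : Even ((n-1) * ((n-1)+1)) := Nat.even_mul_succ_self _
        have h2 : n - 1 + 1 = n := Nat.succ_pred_eq_of_pos hn
        rwa [h2] at this
    _ = lc ^ (n-1) * (DC.roots.map fun t => (FC.roots.map fun r => t - r).prod).prod := by
        rw [ms_prod_comm FC.roots DC.roots (fun r t => t - r)]
    _ = (DC.roots.map fun t => FC.eval t).prod := by
        rw [← cardD, ← ms_prod_map_mul_const]
        exact (congrArg _ (Multiset.map_congr rfl fun t _ => (evF t).symm))


lemma prod_roots_D (n : ℕ) (hn : 0 < n) (ψ : ℂ) (hψ : IsPrimitiveRoot ψ n) (f : ℂ → ℂ) :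
    f 1 * ((((D n).map (algebraMap ℚ ℂ)).roots).map f).prod
      = ∏ i ∈ Finset.range n, f (ψ ^ i) := by
  set DC := (D n).map (algebraMap ℚ ℂ) with hDCdef
  have hid : DC * (X - 1) = X ^ n - 1 := by
    rw [hDCdef, ← Polynomial.map_one (algebraMap ℚ ℂ), ← Polynomial.map_X (algebraMap ℚ ℂ),
      ← Polynomial.map_sub, ← Polynomial.map_mul, X_sub_one_mul_D, Polynomial.map_sub,
      Polynomial.map_pow, Polynomial.map_one, Polynomial.map_X]
  have hne : DC * (X - 1) ≠ 0 := by
    rw [hid]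
    intro h
    have := congrArg (fun p => Polynomial.coeff p n) h
    simp only [coeff_sub, coeff_X_pow, if_pos rfl, coeff_zero] at this
    rw [coeff_one, if_neg hn.ne'] at this
    norm_num at this
  have h2 : (X - 1 : ℂ[X]).roots = {1} := by
    rw [(by rw [C_1] : (1:ℂ[X]) = C 1), roots_X_sub_C]
  have h3 := hψ.nthRoots_eq (one_pow n)
  rw [nthRoots, C_1] at h3
  simp only [mul_one] at h3
  rw [← hid, roots_mul hne, h2] at h3
  have : ((DC.roots + {(1:ℂ)}).map f).prod = ((Multiset.range n).map (fun i => f (ψ ^ i))).prod := by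
    rw [h3, Multiset.map_map]; rfl
  rw [Multiset.map_add, Multiset.prod_add] at this
  simp only [Multiset.map_singleton, Multiset.prod_singleton] at this
  rw [mul_comm] at this
  rw [this, Finset.prod_eq_multiset_prod, Finset.range_val]


lemma eval_FC (n : ℕ) (θ : ℂ) :
    ((F n).map (algebraMap ℚ ℂ)).eval θ = 1 + ∑ k ∈ Finset.Icc 1 n, (k:ℂ)⁻¹ * θ ^ k := by
  rw [F]
  simp only [Polynomial.map_add, Polynomial.map_one, Polynomial.map_sum, Polynomial.map_mul,
    Polynomial.map_pow, Polynomial.map_C, Polynomial.map_X, eval_add, eval_one, eval_finset_sum,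
    eval_mul, eval_pow, eval_C, eval_X]
  congr 1
  refine Finset.sum_congr rfl fun k _ => ?_
  rw [map_inv₀, map_natCast]

lemma bF_eq (m q n b c : ℕ) (hn : n = m * q) (hb : b = q * c)
    (hdvd : ∀ k ∈ Finset.Icc 1 n, k ∣ b) (hq : 0 < q)
    (hdvdc : ∀ k, ¬ q ∣ k → k ∣ b → k ∣ c) (θ : ℂ) :
    (b:ℂ) * ((F n).map (algebraMap ℚ ℂ)).eval θ
      = (∑ j ∈ Finset.Icc 1 m, ((c / j : ℕ):ℂ) * (θ^q)^j)
        + (q:ℂ) * ((c:ℂ) + ∑ k ∈ (Finset.Icc 1 n).filter (fun k => ¬ (q ∣ k)),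
            ((c / k : ℕ):ℂ) * θ ^ k) := by
  rw [eval_FC, mul_add, mul_one, Finset.mul_sum]
  have key : ∀ k ∈ Finset.Icc 1 n, (b:ℂ) * ((k:ℂ)⁻¹ * θ ^ k) = ((b / k : ℕ):ℂ) * θ ^ k := by
    intro k hk
    simp only [Finset.mem_Icc] at hk
    have hk0 : (k:ℂ) ≠ 0 := Nat.cast_ne_zero.mpr (by omega)
    rw [Nat.cast_div (hdvd k (Finset.mem_Icc.mpr hk)) hk0, div_eq_mul_inv]
    ring
  rw [Finset.sum_congr rfl key,
    ← Finset.sum_filter_add_sum_filter_not (Finset.Icc 1 n) (fun k => q ∣ k)]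
  have h1 : ∑ k ∈ (Finset.Icc 1 n).filter (fun k => q ∣ k), ((b / k : ℕ):ℂ) * θ ^ k
      = ∑ j ∈ Finset.Icc 1 m, ((c / j : ℕ):ℂ) * (θ^q)^j := by
    refine Finset.sum_nbij' (i := fun k => k / q) (j := fun j => q * j) ?_ ?_ ?_ ?_ ?_
    · intro k hk
      simp only [Finset.mem_filter, Finset.mem_Icc] at hk
      obtain ⟨⟨hk1, hk2⟩, j, rfl⟩ := hk
      simp only [Finset.mem_Icc]
      rw [Nat.mul_div_cancel_left _ hq]
      constructor
      · rcases Nat.eq_zero_or_pos j with rfl | h; · omega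
        exact h
      · rw [hn, mul_comm m q] at hk2; exact Nat.le_of_mul_le_mul_left hk2 hq
    · intro j hj
      simp only [Finset.mem_Icc] at hj
      simp only [Finset.mem_filter, Finset.mem_Icc]
      exact ⟨⟨by nlinarith [hj.1], by rw [hn, mul_comm m q]; exact Nat.mul_le_mul_left q hj.2⟩,
        Dvd.intro j rfl⟩
    · intro k hk
      simp only [Finset.mem_filter] at hk
      exact Nat.mul_div_cancel' hk.2
    · intro j _; exact Nat.mul_div_cancel_left _ hq
    · intro k hk
      simp only [Finset.mem_filter, Finset.mem_Icc] at hk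
      obtain ⟨⟨hk1, hk2⟩, j, rfl⟩ := hk
      rw [Nat.mul_div_cancel_left _ hq, hb, Nat.mul_div_mul_left _ _ hq, ← pow_mul, mul_comm q j]
  have h2 : ∀ k ∈ (Finset.Icc 1 n).filter (fun k => ¬ q ∣ k),
      ((b / k : ℕ):ℂ) * θ ^ k = (q:ℂ) * (((c / k : ℕ):ℂ) * θ ^ k) := by
    intro k hk
    simp only [Finset.mem_filter, Finset.mem_Icc] at hk
    have hkc : k ∣ c := hdvdc k hk.2 (hdvd k (Finset.mem_Icc.mpr hk.1))
    have : b / k = q * (c / k) := by rw [hb, Nat.mul_div_assoc q hkc]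
    rw [this]
    push_cast
    ring
  rw [h1, Finset.sum_congr rfl h2, ← Finset.mul_sum]
  have hbqc : (b:ℂ) = (q:ℂ) * (c:ℂ) := by rw [hb]; push_cast; ring
  rw [hbqc]
  ring

noncomputable abbrev OO : Subalgebra ℤ ℂ := integralClosure ℤ ℂ

lemma root_unity_mem_OO {θ : ℂ} {n : ℕ} (hn : 0 < n) (h : θ ^ n = 1) : θ ∈ OO := by
  refine ⟨X ^ n - 1, ?_, ?_⟩
  · simpa using monic_X_pow_sub_C (1:ℤ) hn.ne'
  · simp [h]

lemma natCast_mem_OO (k : ℕ) : (k : ℂ) ∈ OO := Subalgebra.natCast_mem _ _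

lemma rat_of_mem_OO {y : ℚ} (h : (y:ℂ) ∈ OO) : ∃ g : ℤ, (g : ℚ) = y := by
  have h1 : IsIntegral ℤ (y:ℂ) := h
  have h2 : IsIntegral ℤ y := by
    refine (isIntegral_algHom_iff ((algebraMap ℚ ℂ).toIntAlgHom)
      (by exact_mod_cast (algebraMap ℚ ℂ).injective) (x := y)).mp ?_
    exact h1
  exact IsIntegrallyClosed.isIntegral_iff.mp h2

lemma prod_cong_mod {ι : Type*} (qc : ℂ) (hqO : qc ∈ OO) (s : Finset ι) (f g : ι → ℂ)
    (hg : ∀ i ∈ s, g i ∈ OO) (hfg : ∀ i ∈ s, ∃ w ∈ OO, f i = g i + qc * w) :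
    ∃ w ∈ OO, ∏ i ∈ s, f i = ∏ i ∈ s, g i + qc * w := by
  classical
  induction s using Finset.induction_on with
  | empty => exact ⟨0, Subalgebra.zero_mem _, by simp⟩
  | insert a s hnotmem ih =>
    obtain ⟨W, hW, hprod⟩ := ih (fun i hi => hg i (Finset.mem_insert_of_mem hi))
      (fun i hi => hfg i (Finset.mem_insert_of_mem hi))
    obtain ⟨w, hw, hfa⟩ := hfg a (Finset.mem_insert_self a s)
    have hga : g a ∈ OO := hg a (Finset.mem_insert_self a s)
    have hgs : ∏ i ∈ s, g i ∈ OO := Subalgebra.prod_mem _ (fun i hi =>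
      hg i (Finset.mem_insert_of_mem hi))
    refine ⟨w * ∏ i ∈ s, g i + g a * W + qc * (w * W), ?_, ?_⟩
    · exact Subalgebra.add_mem _ (Subalgebra.add_mem _
        (Subalgebra.mul_mem _ hw hgs) (Subalgebra.mul_mem _ hga hW))
        (Subalgebra.mul_mem _ hqO (Subalgebra.mul_mem _ hw hW))
    · rw [Finset.prod_insert hnotmem, Finset.prod_insert hnotmem, hfa, hprod]
      ring


noncomputable def g0 (m : ℕ) (ζ : ℂ) : ℂ := ∑ j ∈ Finset.Icc 1 m, ζ ^ j / (j : ℂ)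

lemma Xc_eq_prod_g0 (m : ℕ) (hm : 0 < m) (ω : ℂ) (hωm : ω ^ m = 1) :
    Xc m ω = ∏ k ∈ Finset.Icc 1 (m - 1), g0 m (ω ^ k) := by
  rw [Xc]
  refine Finset.prod_congr rfl fun k _ => ?_
  rw [g0]
  have hm1 : m - 1 + 1 = m := Nat.succ_pred_eq_of_pos hm
  rw [show Finset.Icc 1 m = Finset.Icc 1 ((m-1)+1) by rw [hm1],
    Finset.sum_Icc_succ_top (by omega)]
  rw [hm1]
  have h1 : (ω ^ k) ^ m / (m:ℂ) = (m:ℂ)⁻¹ := by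
    rw [← pow_mul, mul_comm k m, pow_mul, hωm, one_pow, one_div]
  rw [h1, add_comm]
  congr 1
  refine Finset.sum_congr rfl fun j _ => ?_
  rw [← pow_mul, mul_comm k j]

lemma prod_g0_erase (m : ℕ) (hm : 0 < m) (ω : ℂ) (hω : IsPrimitiveRoot ω m) :
    ∏ k ∈ Finset.Icc 1 (m - 1), g0 m (ω ^ k)
      = ∏ ζ ∈ (Polynomial.nthRootsFinset m (1 : ℂ)).erase 1, g0 m ζ := by
  refine Finset.prod_bij (fun k _ => ω ^ k) ?_ ?_ ?_ ?_
  · intro k hk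
    simp only [Finset.mem_Icc] at hk
    refine Finset.mem_erase.mpr ⟨hω.pow_ne_one_of_pos_of_lt (by omega) (by omega), ?_⟩
    rw [Polynomial.mem_nthRootsFinset hm, ← pow_mul, mul_comm k m, pow_mul, hω.pow_eq_one, one_pow]
  · intro k1 hk1 k2 hk2 h
    simp only [Finset.mem_Icc] at hk1 hk2
    exact hω.pow_inj (by omega) (by omega) h
  · intro ζ hζ
    rw [Finset.mem_erase, Polynomial.mem_nthRootsFinset hm] at hζ
    have : NeZero m := ⟨hm.ne'⟩
    obtain ⟨i, hi, rfl⟩ := hω.eq_pow_of_pow_eq_one hζ.2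
    refine ⟨i, Finset.mem_Icc.mpr ⟨?_, by omega⟩, rfl⟩
    rcases Nat.eq_zero_or_pos i with rfl | h
    · exact absurd (pow_zero ω) hζ.1
    · exact h
  · exact fun _ _ => rfl

lemma Xc_indep (m : ℕ) (hm : 0 < m) (ω ω₂ : ℂ) (hω : IsPrimitiveRoot ω m)
    (hω₂ : IsPrimitiveRoot ω₂ m) : Xc m ω = Xc m ω₂ := by
  rw [Xc_eq_prod_g0 m hm ω hω.pow_eq_one, Xc_eq_prod_g0 m hm ω₂ hω₂.pow_eq_one,
    prod_g0_erase m hm ω hω, prod_g0_erase m hm ω₂ hω₂]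

lemma prod_period (m t : ℕ) (ω' : ℂ) (hω'm : ω' ^ m = 1) (f : ℂ → ℂ) :
    ∏ i ∈ Finset.range (m * t), f (ω' ^ i) = (∏ i ∈ Finset.range m, f (ω' ^ i)) ^ t := by
  induction t with
  | zero => simp
  | succ t ih =>
    rw [Nat.mul_succ, Finset.prod_range_add, ih, pow_succ]
    congr 1
    exact Finset.prod_congr rfl fun i _ => by rw [pow_add, pow_mul, hω'm, one_pow, one_mul]


lemma lcm_ne_zero (s : Finset ℕ) (h : ∀ k ∈ s, k ≠ 0) : s.lcm id ≠ 0 := by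
  classical
  induction s using Finset.induction_on with
  | empty => simp
  | insert a s hnot ih =>
    rw [Finset.lcm_insert]
    have ha := h a (Finset.mem_insert_self a s)
    have hs := ih fun k hk => h k (Finset.mem_insert_of_mem hk)
    simp only [id] at *
    exact Nat.lcm_ne_zero ha hs

lemma factorization_lcm_le (p : ℕ) (s : Finset ℕ) (h : ∀ k ∈ s, k ≠ 0)
    (hp : ∀ k ∈ s, (Nat.factorization k) p ≤ 1) : (Nat.factorization (s.lcm id)) p ≤ 1 := by
  classical
  induction s using Finset.induction_on with
  | empty => simp [Finset.lcm_empty]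
  | insert a s hnot ih =>
    rw [Finset.lcm_insert]
    have ha := h a (Finset.mem_insert_self a s)
    have hs0 : (s.lcm id) ≠ 0 := lcm_ne_zero s fun k hk => h k (Finset.mem_insert_of_mem hk)
    have ihs := ih (fun k hk => h k (Finset.mem_insert_of_mem hk))
      (fun k hk => hp k (Finset.mem_insert_of_mem hk))
    rw [show GCDMonoid.lcm (id a) (s.lcm id) = Nat.lcm a (s.lcm id) from rfl,
      Nat.factorization_lcm ha hs0]
    simp only [Finsupp.sup_apply, id]
    exact sup_le (hp a (Finset.mem_insert_self a s)) ihs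

lemma Ln_facts (m q : ℕ) (hm : 0 < m) (hq : q.Prime) (hqm : m < q) :
    Ln (m * q) ≠ 0 ∧ (∀ k ∈ Finset.Icc 1 (m*q), k ∣ Ln (m*q)) ∧
      (Nat.factorization (Ln (m*q))) q = 1 := by
  have hq1 : 1 < q := hq.one_lt
  have hmem : ∀ k ∈ Finset.Icc 1 (m*q), k ≠ 0 := by
    intro k hk; simp only [Finset.mem_Icc] at hk; omega
  have hne : Ln (m*q) ≠ 0 := lcm_ne_zero _ hmem
  have hdvd : ∀ k ∈ Finset.Icc 1 (m*q), k ∣ Ln (m*q) := by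
    intro k hk
    exact (Finset.dvd_lcm hk : id k ∣ _)
  refine ⟨hne, hdvd, le_antisymm ?_ ?_⟩
  · refine factorization_lcm_le q _ hmem ?_
    intro k hk
    simp only [Finset.mem_Icc] at hk
    by_contra hcon
    push_neg at hcon
    have h2 : q^2 ∣ k := (Nat.Prime.pow_dvd_iff_le_factorization hq (by omega)).mpr hcon
    have : q^2 ≤ k := Nat.le_of_dvd (by omega) h2
    nlinarith [hk.2]
  · have hqmem : q ∣ Ln (m*q) := hdvd q (Finset.mem_Icc.mpr ⟨by omega, by nlinarith⟩)
    have hq1d : q ^ 1 ∣ Ln (m*q) := by rwa [pow_one]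
    have := (Nat.Prime.pow_dvd_iff_le_factorization hq hne).mp hq1d
    simpa using this

lemma range_eq_insert_Icc (n : ℕ) (hn : 0 < n) :
    Finset.range n = insert 0 (Finset.Icc 1 (n-1)) := by
  ext i
  simp only [Finset.mem_range, Finset.mem_insert, Finset.mem_Icc]
  omega
-- gc : integral version of c * g0
noncomputable def gc (m c : ℕ) (ζ : ℂ) : ℂ := ∑ j ∈ Finset.Icc 1 m, ((c / j : ℕ):ℂ) * ζ ^ j

lemma gc_mem (m c : ℕ) (ζ : ℂ) (hζ : ζ ∈ OO) : gc m c ζ ∈ OO :=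
  Subalgebra.sum_mem _ fun j _ => Subalgebra.mul_mem _ (natCast_mem_OO _) (Subalgebra.pow_mem _ hζ j)

lemma gc_eq (m c : ℕ) (hj : ∀ j ∈ Finset.Icc 1 m, j ∣ c) (ζ : ℂ) :
    gc m c ζ = (c:ℂ) * g0 m ζ := by
  rw [gc, g0, Finset.mul_sum]
  refine Finset.sum_congr rfl fun j hjm => ?_
  have hj0 : (j:ℂ) ≠ 0 := Nat.cast_ne_zero.mpr (by simp only [Finset.mem_Icc] at hjm; omega)
  rw [Nat.cast_div (hj j hjm) hj0]
  ring

theorem stmt8 (m q : ℕ) (hm : 0 < m) (hq : q.Prime) (hqm : m < q) (hgcd : Nat.gcd q m = 1)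
    (hmod : (m * q) % 4 = 1) (ω : ℂ) (hω : IsPrimitiveRoot ω m)
    (hX : ∃ x : ℚ, (x : ℂ) = Xc m ω ∧ x ≠ 0 ∧ padicValRat q x = 0)
    (hY : Y m ≠ 0 ∧ padicValRat q (Y m) = 0) :
    ¬ ∃ r : ℚ, (r : ℂ) ^ 2 = discC (F (m * q)) := by
  rintro ⟨r, hr⟩
  obtain ⟨x, hxX, hx0, hxval⟩ := hX
  obtain ⟨hY0, hYval⟩ := hY
  have hqf : Fact q.Prime := ⟨hq⟩
  have hq0 : 0 < q := hq.pos
  set n := m * q with hndef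
  have hn : 0 < n := Nat.mul_pos hm hq0
  have hmn : m ≤ n := Nat.le_mul_of_pos_right m hq0
  have hqn : q ≤ n := Nat.le_mul_of_pos_left q hm
  -- Ln facts
  obtain ⟨hb0, hdvd, hfact⟩ := Ln_facts m q hm hq hqm
  set b := Ln n with hbdef
  have hqb : q ∣ b := by
    have := (Nat.Prime.pow_dvd_iff_le_factorization hq hb0).mpr (le_of_eq hfact.symm)
    rwa [pow_one] at this
  set c := b / q with hcdef
  have hbqc : b = q * c := (Nat.mul_div_cancel' hqb).symm
  have hc0 : c ≠ 0 := by intro h; rw [h, mul_zero] at hbqc; exact hb0 hbqc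
  have hqc : ¬ q ∣ c := by
    intro hd
    obtain ⟨e, he⟩ := hd
    have h2 : q ^ 2 ∣ b := by rw [hbqc, he]; exact ⟨e, by ring⟩
    have := (Nat.Prime.pow_dvd_iff_le_factorization hq hb0).mp h2
    omega
  have hdvdc : ∀ k, ¬ q ∣ k → k ∣ b → k ∣ c := by
    intro k hk hkb
    have hco : Nat.Coprime k q := ((Nat.Prime.coprime_iff_not_dvd hq).mpr hk).symm
    rw [hbqc] at hkb
    exact hco.dvd_of_dvd_mul_left hkb
  have hjc : ∀ j ∈ Finset.Icc 1 m, j ∣ c := by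
    intro j hj
    simp only [Finset.mem_Icc] at hj
    refine hdvdc j (fun hd => ?_) (hdvd j (Finset.mem_Icc.mpr ⟨hj.1, hj.2.trans hmn⟩))
    have := Nat.le_of_dvd (by omega) hd
    omega
  -- primitive roots
  have hψ : IsPrimitiveRoot (Complex.exp (2 * Real.pi * Complex.I / n)) n :=
    Complex.isPrimitiveRoot_exp n hn.ne'
  set ψ : ℂ := Complex.exp (2 * Real.pi * Complex.I / n) with hψdef
  have hψq : IsPrimitiveRoot (ψ ^ q) m := hψ.pow hn (by rw [hndef, mul_comm])
  have hψO : ψ ∈ OO := root_unity_mem_OO hn hψ.pow_eq_one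
  set PC : Polynomial ℂ := (F n).map (algebraMap ℚ ℂ) with hPCdef
  set DC : Polynomial ℂ := (D n).map (algebraMap ℚ ℂ) with hDCdef
  -- Step A : disc = n * prod over roots of DC
  have heven : Even (n.choose 2) := by
    obtain ⟨t, ht⟩ : ∃ t, n - 1 = 4 * t := ⟨(n-1)/4, by omega⟩
    rw [Nat.choose_two_right, ht]
    have h2 : n * (4 * t) = 2 * (2 * (n * t)) := by ring
    rw [h2, Nat.mul_div_cancel_left _ (by norm_num)]
    exact ⟨2 * (n*t) - (n*t), by omega⟩
  have hdisc : discC (F n) = (n:ℂ) * (DC.roots.map (fun t => PC.eval t)).prod := by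
    rw [discC, resC_eq n hn, F_leadingCoeff hn, F_natDegree hn, heven.neg_one_pow, one_mul]
    have hcast : (((n:ℚ)⁻¹ : ℚ) : ℂ)⁻¹ = (n:ℂ) := by push_cast; rw [inv_inv]
    rw [hcast]
  -- Step B : express as product over Icc 1 (n-1)
  have hprodD := prod_roots_D n hn ψ hψ (fun t => PC.eval t)
  have hE1 : PC.eval 1 ≠ 0 := by
    have h1 : PC.eval 1 = ((1 + ∑ k ∈ Finset.Icc 1 n, (k:ℚ)⁻¹ : ℚ) : ℂ) := by
      rw [hPCdef, eval_FC]; push_cast; simp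
    rw [h1]
    have hpos : (0:ℚ) < 1 + ∑ k ∈ Finset.Icc 1 n, (k:ℚ)⁻¹ := by
      have : (0:ℚ) ≤ ∑ k ∈ Finset.Icc 1 n, (k:ℚ)⁻¹ :=
        Finset.sum_nonneg fun k _ => by positivity
      linarith
    exact_mod_cast hpos.ne'
  have hrange : ∏ i ∈ Finset.range n, PC.eval (ψ ^ i)
      = PC.eval 1 * ∏ i ∈ Finset.Icc 1 (n-1), PC.eval (ψ ^ i) := by
    rw [range_eq_insert_Icc n hn, Finset.prod_insert (by simp), pow_zero]
  set PP : ℂ := ∏ i ∈ Finset.Icc 1 (n-1), PC.eval (ψ ^ i) with hPPdef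
  have hPP : (DC.roots.map (fun t => PC.eval t)).prod = PP := by
    apply mul_left_cancel₀ hE1
    rw [hPPdef, ← hrange, ← hprodD]
  have hr2 : (r:ℂ)^2 = (n:ℂ) * PP := by rw [hr, hdisc, hPP]
  -- Step C : congruence mod q
  have hdec : ∀ i ∈ Finset.Icc 1 (n-1), ∃ w ∈ OO,
      (b:ℂ) * PC.eval (ψ ^ i) = gc m c ((ψ^q) ^ i) + (q:ℂ) * w := by
    intro i _
    refine ⟨(c:ℂ) + ∑ k ∈ (Finset.Icc 1 n).filter (fun k => ¬ (q ∣ k)),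
        ((c / k : ℕ):ℂ) * (ψ^i) ^ k, ?_, ?_⟩
    · exact Subalgebra.add_mem _ (natCast_mem_OO c) (Subalgebra.sum_mem _ fun k _ =>
        Subalgebra.mul_mem _ (natCast_mem_OO _)
          (Subalgebra.pow_mem _ (Subalgebra.pow_mem _ hψO i) k))
    · rw [hPCdef, bF_eq m q n b c hndef hbqc hdvd hq0 hdvdc (ψ^i), gc,
        show (ψ^i)^q = (ψ^q)^i from by rw [← pow_mul, ← pow_mul, mul_comm i q]]
  have hgmem : ∀ i ∈ Finset.Icc 1 (n-1), gc m c ((ψ^q) ^ i) ∈ OO :=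
    fun i _ => gc_mem m c _ (Subalgebra.pow_mem _ (Subalgebra.pow_mem _ hψO q) i)
  obtain ⟨W, hW, hcong⟩ := prod_cong_mod (q:ℂ) (natCast_mem_OO q) (Finset.Icc 1 (n-1))
      (fun i => (b:ℂ) * PC.eval (ψ ^ i)) (fun i => gc m c ((ψ^q) ^ i)) hgmem hdec
  have card1 : (Finset.Icc 1 (n-1)).card = n - 1 := by rw [Nat.card_Icc]; omega
  have hprodf : ∏ i ∈ Finset.Icc 1 (n-1), ((b:ℂ) * PC.eval (ψ ^ i)) = (b:ℂ)^(n-1) * PP := by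
    rw [Finset.prod_mul_distrib, Finset.prod_const, card1, hPPdef]
  -- product of gc
  have hYC : g0 m 1 = ((Y m : ℚ) : ℂ) := by
    rw [g0, Y]; push_cast
    exact Finset.sum_congr rfl fun j _ => by rw [one_pow, one_div]
  have hYC0 : ((Y m : ℚ) : ℂ) ≠ 0 := by exact_mod_cast hY0
  have hprodg0 : ∏ i ∈ Finset.Icc 1 (n-1), g0 m ((ψ^q) ^ i)
      = ((Y m : ℚ) : ℂ)^(q-1) * (Xc m (ψ^q))^q := by
    have hper := prod_period m q (ψ^q) hψq.pow_eq_one (g0 m)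
    have hrangeN : ∏ i ∈ Finset.range n, g0 m ((ψ^q) ^ i)
        = g0 m 1 * ∏ i ∈ Finset.Icc 1 (n-1), g0 m ((ψ^q) ^ i) := by
      rw [range_eq_insert_Icc n hn, Finset.prod_insert (by simp), pow_zero]
    have hrangeM : ∏ i ∈ Finset.range m, g0 m ((ψ^q) ^ i)
        = g0 m 1 * ∏ i ∈ Finset.Icc 1 (m-1), g0 m ((ψ^q) ^ i) := by
      rw [range_eq_insert_Icc m hm, Finset.prod_insert (by simp), pow_zero]
    rw [hndef] at hrangeN
    rw [hper, hrangeM] at hrangeN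
    rw [← Xc_eq_prod_g0 m hm (ψ^q) hψq.pow_eq_one] at hrangeN
    rw [hYC] at hrangeN
    apply mul_left_cancel₀ hYC0
    rw [← hrangeN, mul_pow]
    have hq1 : ((Y m : ℚ):ℂ) ^ q = ((Y m : ℚ):ℂ) * ((Y m : ℚ):ℂ) ^ (q-1) := by
      rw [← pow_succ']
      congr 1
      omega
    rw [hq1]
    ring
  have hXc : Xc m (ψ^q) = (x : ℂ) := by
    rw [Xc_indep m hm (ψ^q) ω hψq hω, hxX]
  have hprodg : ∏ i ∈ Finset.Icc 1 (n-1), gc m c ((ψ^q) ^ i)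
      = ((c^(n-1) * (Y m)^(q-1) * x^q : ℚ) : ℂ) := by
    calc ∏ i ∈ Finset.Icc 1 (n-1), gc m c ((ψ^q) ^ i)
        = ∏ i ∈ Finset.Icc 1 (n-1), ((c:ℂ) * g0 m ((ψ^q) ^ i)) :=
          Finset.prod_congr rfl fun i _ => gc_eq m c hjc _
      _ = (c:ℂ)^(n-1) * ∏ i ∈ Finset.Icc 1 (n-1), g0 m ((ψ^q) ^ i) := by
          rw [Finset.prod_mul_distrib, Finset.prod_const, card1]
      _ = (c:ℂ)^(n-1) * (((Y m : ℚ) : ℂ)^(q-1) * (Xc m (ψ^q))^q) := by rw [hprodg0]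
      _ = ((c^(n-1) * (Y m)^(q-1) * x^q : ℚ) : ℂ) := by rw [hXc]; push_cast; ring
  -- key equation over ℂ
  set u : ℚ := c^(n-1) * (Y m)^(q-1) * x^q with hudef
  have hkey : (b:ℂ)^(n-1) * PP = (u : ℂ) + (q:ℂ) * W := by
    rw [← hprodf, hcong, hprodg]
  -- transfer to ℚ
  have hn0C : (n:ℂ) ≠ 0 := Nat.cast_ne_zero.mpr hn.ne'
  set a : ℚ := b^(n-1) * (r^2 / n) with hadef
  have haC : (a:ℂ) = (b:ℂ)^(n-1) * PP := by
    have hPPr : PP = (r:ℂ)^2 / (n:ℂ) := by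
      rw [eq_div_iff hn0C]
      linear_combination -hr2
    rw [hadef]; push_cast; rw [hPPr]
  have hqC : (q:ℂ) ≠ 0 := Nat.cast_ne_zero.mpr hq0.ne'
  have hWrat : (((a - u)/q : ℚ) : ℂ) = W := by
    push_cast
    rw [haC, hkey]
    field_simp
    ring
  obtain ⟨g, hg⟩ := rat_of_mem_OO (hWrat ▸ hW)
  have hqQ : (q:ℚ) ≠ 0 := Nat.cast_ne_zero.mpr hq0.ne'
  have hau : a = u + q * g := by
    have h := hg
    rw [eq_div_iff hqQ] at h
    linarith
  -- valuations
  have hcQ : (c:ℚ) ≠ 0 := Nat.cast_ne_zero.mpr hc0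
  have hvc : padicValRat q (c:ℚ) = 0 := by
    rw [padicValRat.of_nat, padicValNat.eq_zero_of_not_dvd hqc]
    simp
  have hvu : padicValRat q u = 0 := by
    rw [hudef,
      padicValRat.mul (mul_ne_zero (pow_ne_zero _ hcQ) (pow_ne_zero _ hY0)) (pow_ne_zero _ hx0),
      padicValRat.mul (pow_ne_zero _ hcQ) (pow_ne_zero _ hY0),
      padicValRat.pow (c:ℚ), padicValRat.pow (Y m), padicValRat.pow x, hxval, hYval, hvc]
    ring
  have hu0 : u ≠ 0 :=
    mul_ne_zero (mul_ne_zero (pow_ne_zero _ hcQ) (pow_ne_zero _ hY0)) (pow_ne_zero _ hx0)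
  have ha0 : a ≠ 0 ∧ padicValRat q a = 0 := by
    rcases eq_or_ne g 0 with rfl | hg0
    · rw [Int.cast_zero, mul_zero, add_zero] at hau
      exact ⟨hau ▸ hu0, hau ▸ hvu⟩
    · have hgQ : ((g:ℚ)) ≠ 0 := Int.cast_ne_zero.mpr hg0
      have hqg0 : (q:ℚ) * g ≠ 0 := mul_ne_zero hqQ hgQ
      have hvg : 0 ≤ padicValRat q ((g:ℚ)) := by
        rw [padicValRat.of_int]
        exact_mod_cast Int.ofNat_nonneg _
      have hvqg : 1 ≤ padicValRat q ((q:ℚ) * g) := by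
        rw [padicValRat.mul hqQ hgQ, padicValRat.self hq.one_lt]
        omega
      have ha : a ≠ 0 := by
        intro h
        rw [h] at hau
        have hueq : u = -((q:ℚ)*(g:ℚ)) := by linarith
        rw [hueq, padicValRat.neg] at hvu
        omega
      refine ⟨ha, ?_⟩
      rw [hau, padicValRat.add_eq_min (hau ▸ ha) hu0 hqg0 (by omega), hvu]
      omega
  have hr0 : r ≠ 0 := by
    intro h
    apply ha0.1
    rw [hadef, h]
    simp
  have hrQ : r^2/(n:ℚ) ≠ 0 := by
    have hnQ : (n:ℚ) ≠ 0 := Nat.cast_ne_zero.mpr hn.ne'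
    exact div_ne_zero (pow_ne_zero _ hr0) hnQ
  have hbQ : (b:ℚ) ≠ 0 := Nat.cast_ne_zero.mpr hb0
  have hnQ : (n:ℚ) ≠ 0 := Nat.cast_ne_zero.mpr hn.ne'
  have hvb : padicValRat q (b:ℚ) = 1 := by
    rw [padicValRat.of_nat, ← Nat.factorization_def b hq, hfact]
    simp
  have hqm' : ¬ q ∣ m := by
    intro hd
    have h1 : q ∣ Nat.gcd q m := Nat.dvd_gcd dvd_rfl hd
    rw [hgcd] at h1
    exact hq.one_lt.ne' (Nat.dvd_one.mp h1)
  have hvn : padicValRat q (n:ℚ) = 1 := by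
    rw [padicValRat.of_nat, show (n:ℕ) = m * q from hndef,
      padicValNat.mul hm.ne' hq0.ne', padicValNat.eq_zero_of_not_dvd hqm', padicValNat_self]
    simp
  have hfinal : padicValRat q a = ((n-1:ℕ):ℤ) * 1 + (2 * padicValRat q r - 1) := by
    rw [hadef, padicValRat.mul (pow_ne_zero _ hbQ) hrQ, padicValRat.pow (b:ℚ), hvb,
      padicValRat.div (pow_ne_zero _ hr0) hnQ, padicValRat.pow r, hvn]
    push_cast
    ring
  obtain ⟨t, ht⟩ : ∃ t, n = 2*t+1 := ⟨n/2, by omega⟩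
  have hcast : ((n-1:ℕ):ℤ) = 2*t := by omega
  rw [ha0.2, hcast] at hfinal
  omega
end

section
/- For every positive integer m, the complex number X(m) = ∏_{k=1}^{m−1} (1/m + ω^k + ω^{2k}/2 + ⋯ + ω^{(m−1)k}/(m−1)), where ω ∈ ℂ is a primitive m-th root of unity, is a rational number. -/
open Polynomial BigOperators

lemma modMemIcc {m a : ℕ} (hm : 0 < m) (ha : Nat.Coprime a m) {k : ℕ}
    (hk : k ∈ Finset.Icc 1 (m - 1)) : (a * k) % m ∈ Finset.Icc 1 (m - 1) := by
  rw [Finset.mem_Icc] at hk ⊢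
  have hlt := Nat.mod_lt (a * k) hm
  rcases Nat.eq_zero_or_pos ((a * k) % m) with h | h
  · exfalso
    have hd : m ∣ a * k := Nat.dvd_of_mod_eq_zero h
    have hdk : m ∣ k := (Nat.Coprime.dvd_of_dvd_mul_left ha.symm hd)
    have := Nat.le_of_dvd (by omega) hdk
    omega
  · omega

lemma invModAux {m a b : ℕ} (hab : a * b ≡ 1 [MOD m]) {k : ℕ} (hk : k < m) :
    (b * ((a * k) % m)) % m = k := by
  have h1 : b * ((a * k) % m) ≡ k [MOD m] := by
    calc b * ((a * k) % m) ≡ b * (a * k) [MOD m] := (Nat.ModEq.refl b).mul (Nat.mod_modEq _ _)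
    _ = (a * b) * k := by ring
    _ ≡ 1 * k [MOD m] := hab.mul_right k
    _ = k := one_mul k
  have h2 : (b * ((a * k) % m)) % m = k % m := h1
  rw [h2, Nat.mod_eq_of_lt hk]

/-- For every positive integer `m` and every primitive `m`-th root of unity
`ω ∈ ℂ`, the complex number `X(m)` is a rational number. -/
theorem stmt9 (m : ℕ) (hm : 0 < m) (ω : ℂ) (hω : IsPrimitiveRoot ω m) :
    ∃ r : ℚ, (r : ℂ) = Xc m ω := by
  haveI : NeZero m := ⟨hm.ne'⟩
  set n : ℕ+ := ⟨m, hm⟩ with hn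
  have hωn : IsPrimitiveRoot ω (n : ℕ+) := hω
  set K := IntermediateField.adjoin ℚ ({ω} : Set ℂ) with hK
  have hint : IsIntegral ℚ ω := (hω.isIntegral hm).tower_top
  have H := IntermediateField.adjoin_simple_toSubalgebra_of_isAlgebraic hint.isAlgebraic
  haveI hcyc : IsCyclotomicExtension {m} ℚ K := by
    refine IsCyclotomicExtension.equiv _ _ _ (h := ?_) (.refl : K.toSubalgebra ≃ₐ[ℚ] _)
    rw [hK, H]
    exact hωn.adjoin_isCyclotomicExtension ℚ
  haveI := IsCyclotomicExtension.isGalois {m} ℚ K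
  haveI : FiniteDimensional ℚ K := IsCyclotomicExtension.finiteDimensional {m} ℚ K
  set ζ : K := ⟨ω, IntermediateField.mem_adjoin_simple_self ℚ ω⟩ with hζdef
  have hζ : IsPrimitiveRoot ζ m := by
    rwa [← IsPrimitiveRoot.coe_submonoidClass_iff]
  have hpow : ∀ e : ℕ, ζ ^ e = ζ ^ (e % m) := by
    intro e
    conv_lhs => rw [← Nat.div_add_mod e m]
    rw [pow_add, pow_mul, hζ.pow_eq_one, one_pow, one_mul]
  set x : K := ∏ k ∈ Finset.Icc 1 (m - 1),
      ((m : K)⁻¹ + ∑ j ∈ Finset.Icc 1 (m - 1), ζ ^ (j * k) / (j : K)) with hx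
  have hfix : ∀ σ : K ≃ₐ[ℚ] K, σ x = x := by
    intro σ
    have hσζ : IsPrimitiveRoot (σ ζ) m := hζ.map_of_injective σ.injective
    have hσζm : (σ ζ) ^ m = 1 := hσζ.pow_eq_one
    obtain ⟨a, halt, ha⟩ := hζ.eq_pow_of_pow_eq_one hσζm
    have hcop : Nat.Coprime a m := (hζ.pow_iff_coprime hm a).mp (ha ▸ hσζ)
    set b := ((a : ZMod m)⁻¹).val with hb
    have hab : a * b ≡ 1 [MOD m] := by
      have h1 : ((a * b : ℕ) : ZMod m) = ((1 : ℕ) : ZMod m) := by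
        push_cast
        rw [hb, ZMod.natCast_zmod_val, ZMod.coe_mul_inv_eq_one a hcop]
      exact (ZMod.natCast_eq_natCast_iff _ _ _).mp h1
    have hba : b * a ≡ 1 [MOD m] := by rwa [mul_comm] at hab
    have hbcop : Nat.Coprime b m := Nat.coprime_of_mul_modEq_one a hba
    have hstep : σ x = ∏ k ∈ Finset.Icc 1 (m - 1),
        ((m : K)⁻¹ + ∑ j ∈ Finset.Icc 1 (m - 1), ζ ^ (j * ((a * k) % m)) / (j : K)) := by
      rw [hx, map_prod]
      refine Finset.prod_congr rfl fun k _ => ?_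
      rw [map_add, map_inv₀, map_natCast, map_sum]
      congr 1
      refine Finset.sum_congr rfl fun j _ => ?_
      rw [map_div₀, map_pow, map_natCast, ← ha, ← pow_mul]
      congr 1
      rw [hpow (a * (j * k)), hpow (j * ((a * k) % m)), Nat.mul_mod j, Nat.mod_mod_of_dvd,
        ← Nat.mul_mod, ← mul_assoc, mul_comm a j, mul_assoc]
      exact dvd_refl m
    rw [hstep, hx]
    refine Finset.prod_nbij' (fun k => (a * k) % m) (fun k => (b * k) % m)
      (fun k hk => modMemIcc hm hcop hk) (fun k hk => modMemIcc hm hbcop hk)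
      (fun k hk => ?_) (fun k hk => ?_) (fun k hk => rfl)
    · rw [Finset.mem_Icc] at hk
      exact invModAux hab (by omega)
    · rw [Finset.mem_Icc] at hk
      exact invModAux hba (by omega)
  have hmem : x ∈ IntermediateField.fixedField (⊤ : Subgroup (K ≃ₐ[ℚ] K)) := by
    rintro ⟨σ, -⟩
    exact hfix σ
  have hbot : IntermediateField.fixedField (⊤ : Subgroup (K ≃ₐ[ℚ] K)) = ⊥ := by
    have h := (IsGalois.tfae (F := ℚ) (E := K)).out 0 1
    exact h.mp inferInstance
  rw [hbot, IntermediateField.mem_bot] at hmem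
  obtain ⟨r, hr⟩ := hmem
  refine ⟨r, ?_⟩
  have hval : (algebraMap K ℂ) x = Xc m ω := by
    rw [hx, Xc, map_prod]
    refine Finset.prod_congr rfl fun k _ => ?_
    rw [map_add, map_inv₀, map_natCast, map_sum]
    congr 1
  rw [← hval, ← hr]
  simp [IsScalarTower.algebraMap_apply ℚ K ℂ]
end

section
/- Fix a positive integer m and let q be a prime with q > m and gcd(q,m) = 1, and set n = mq. If the rational numbers X(m) and Y(m) both have q-adic valuation 0, then the integer 𝒫_n = ∏_θ F̃_n(θ), with θ ranging over the nontrivial n-th roots of unity in ℂ, is not divisible by q. -/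
open Polynomial BigOperators

namespace Stmt10aux
open Polynomial Matrix

variable {R : Type*} [CommRing R]

/-! ### The multiplication matrix and its determinant -/

noncomputable def Mmat (f g : R[X]) (d : ℕ) : Matrix (Fin d) (Fin d) R :=
  Matrix.of fun i j => ((f * X ^ (i : ℕ)) %ₘ g).coeff (j : ℕ)

lemma poly_eq_sum_fin {p : R[X]} {d : ℕ} (h : p.natDegree < d) :
    p = ∑ k : Fin d, C (p.coeff (k : ℕ)) * X ^ (k : ℕ) := by
  conv_lhs => rw [p.as_sum_range' d h]
  rw [Fin.sum_univ_eq_sum_range (fun i => C (p.coeff i) * X ^ i)]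
  simp [C_mul_X_pow_eq_monomial]

lemma sum_modByMonic {ι : Type*} (s : Finset ι) (F : ι → R[X]) (g : R[X]) :
    (∑ k ∈ s, F k) %ₘ g = ∑ k ∈ s, F k %ₘ g :=
  map_sum (modByMonicHom g) F s

lemma mod_mul_expand {g : R[X]} (b p : R[X]) {d : ℕ} (hp : p.natDegree < d) :
    (b * p) %ₘ g = ∑ k : Fin d, C (p.coeff (k : ℕ)) * ((b * X ^ (k : ℕ)) %ₘ g) := by
  conv_lhs => rw [poly_eq_sum_fin hp]
  rw [Finset.mul_sum, sum_modByMonic]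
  refine Finset.sum_congr rfl fun k _ => ?_
  rw [show b * (C (p.coeff (k : ℕ)) * X ^ (k : ℕ)) = C (p.coeff (k : ℕ)) * (b * X ^ (k : ℕ)) by
    ring]
  rw [← smul_eq_C_mul, ← smul_eq_C_mul, smul_modByMonic]

lemma Mmat_mul {g : R[X]} {d : ℕ} (hg : g.Monic) (hd : g.natDegree = d) (a b : R[X]) :
    Mmat a g d * Mmat b g d = Mmat (a * b) g d := by
  rcases Nat.eq_zero_or_pos d with rfl | hd0
  · exact Subsingleton.elim _ _
  have hg1 : g ≠ 1 := fun h => by rw [h, natDegree_one] at hd; omega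
  ext i j
  rw [Matrix.mul_apply]
  have h1 : ((a * X ^ (i : ℕ)) %ₘ g).natDegree < d := by
    have := natDegree_modByMonic_lt (a * X ^ (i : ℕ)) hg hg1; omega
  have key : (b * ((a * X ^ (i : ℕ)) %ₘ g)) %ₘ g
      = ∑ k : Fin d, C (((a * X ^ (i : ℕ)) %ₘ g).coeff (k : ℕ)) * ((b * X ^ (k : ℕ)) %ₘ g) :=
    mod_mul_expand b _ h1
  have key2 : (b * ((a * X ^ (i : ℕ)) %ₘ g)) %ₘ g = (a * b * X ^ (i : ℕ)) %ₘ g := by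
    apply modByMonic_eq_of_dvd_sub hg
    have h := modByMonic_add_div (a * X ^ (i : ℕ)) g
    refine ⟨-(b * ((a * X ^ (i : ℕ)) /ₘ g)), ?_⟩
    linear_combination b * h
  rw [key2] at key
  have h3 := congrArg (fun p => p.coeff (j : ℕ)) key
  simp only [finset_sum_coeff, coeff_C_mul] at h3
  simp only [Mmat, Matrix.of_apply]
  exact h3.symm

lemma Mmat_map {S : Type*} [CommRing S] (φ : R →+* S) (f g : R[X]) (hg : g.Monic) (d : ℕ) :
    (Mmat f g d).map φ = Mmat (f.map φ) (g.map φ) d := by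
  ext i j
  simp only [Mmat, Matrix.map_apply, Matrix.of_apply]
  rw [← coeff_map, Polynomial.map_modByMonic φ hg, Polynomial.map_mul, Polynomial.map_pow,
    map_X]

lemma Mmat_det_isUnit {k : Type*} [Field k] {g f : k[X]} {d : ℕ} (hg : g.Monic)
    (hd : g.natDegree = d) (h : IsCoprime f g) : IsUnit (Mmat f g d).det := by
  obtain ⟨u, v, huv⟩ := h
  have hone : Mmat u g d * Mmat f g d = 1 := by
    rw [Mmat_mul hg hd]
    have huf : u * f = 1 - v * g := by linear_combination huv
    rw [huf]
    ext i j
    simp only [Mmat, Matrix.of_apply, sub_mul, one_mul, sub_modByMonic]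
    have hz : (v * g * X ^ (i : ℕ)) %ₘ g = 0 :=
      (modByMonic_eq_zero_iff_dvd hg).2 ⟨v * X ^ (i : ℕ), by ring⟩
    rw [hz, sub_zero, (modByMonic_eq_self_iff hg).2, coeff_X_pow, Matrix.one_apply]
    · simp [Fin.ext_iff, eq_comm]
    · rw [degree_X_pow, degree_eq_natDegree hg.ne_zero, hd]
      exact_mod_cast i.isLt
  have := congrArg Matrix.det hone
  rw [Matrix.det_mul, Matrix.det_one] at this
  exact isUnit_of_mul_isUnit_right (this ▸ isUnit_one)

lemma Mmat_det_eq_prod {K : Type*} [Field K] {g : K[X]} {d : ℕ} (hg : g.Monic)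
    (hd : g.natDegree = d) {e : Fin d → K} (he : Function.Injective e)
    (hfact : g = ∏ i : Fin d, (X - C (e i))) (f : K[X]) :
    (Mmat f g d).det = ∏ i, f.eval (e i) := by
  rcases Nat.eq_zero_or_pos d with rfl | hd0
  · simp [Matrix.det_isEmpty]
  have hg1 : g ≠ 1 := fun h => by rw [h, natDegree_one] at hd; omega
  have hroot : ∀ j : Fin d, g.eval (e j) = 0 := by
    intro j
    rw [hfact, eval_prod]
    exact Finset.prod_eq_zero (Finset.mem_univ j) (by simp)
  set W : Matrix (Fin d) (Fin d) K := Matrix.of fun i j : Fin d => e j ^ (i : ℕ) with hW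
  have hMW : Mmat f g d * W = W * Matrix.diagonal (fun j => f.eval (e j)) := by
    ext i j
    rw [Matrix.mul_apply, Matrix.mul_diagonal]
    have h1 : ((f * X ^ (i : ℕ)) %ₘ g).natDegree < d := by
      have := natDegree_modByMonic_lt (f * X ^ (i : ℕ)) hg hg1; omega
    have hsum : (∑ k : Fin d, Mmat f g d i k * W k j)
        = ((f * X ^ (i : ℕ)) %ₘ g).eval (e j) := by
      conv_rhs => rw [poly_eq_sum_fin h1]
      rw [eval_finset_sum]
      refine Finset.sum_congr rfl fun k _ => ?_
      simp [Mmat, hW]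
    rw [hsum]
    have h2 : ((f * X ^ (i : ℕ)) %ₘ g).eval (e j) = (f * X ^ (i : ℕ)).eval (e j) := by
      conv_rhs => rw [← modByMonic_add_div (f * X ^ (i : ℕ)) g]
      simp [hroot j]
    rw [h2]
    simp [hW]
    ring
  have hWdet : W.det ≠ 0 := by
    have : W = (Matrix.vandermonde e)ᵀ := by
      ext i j; simp [hW, Matrix.vandermonde]
    rw [this, Matrix.det_transpose]
    exact Matrix.det_vandermonde_ne_zero_iff.2 he
  have hdet := congrArg Matrix.det hMW
  rw [Matrix.det_mul, Matrix.det_mul, Matrix.det_diagonal] at hdet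
  rw [mul_comm W.det _] at hdet
  exact mul_right_cancel₀ hWdet hdet

/-! ### lcm facts -/

lemma dvd_Ln {k n : ℕ} (h1 : 1 ≤ k) (h2 : k ≤ n) : k ∣ Ln n := by
  have : k ∈ Finset.Icc 1 n := Finset.mem_Icc.2 ⟨h1, h2⟩
  exact Finset.dvd_lcm (f := id) this

lemma lcm_ne_zero_of : ∀ (s : Finset ℕ), (∀ x ∈ s, x ≠ 0) → s.lcm id ≠ 0 := by
  classical
  intro s
  induction s using Finset.induction_on with
  | empty => intro _; simp
  | @insert a s ha ih =>
    intro h0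
    rw [Finset.lcm_insert]
    have h1 : a ≠ 0 := h0 a (Finset.mem_insert_self _ _)
    have h2 : s.lcm id ≠ 0 := ih fun x hx => h0 x (Finset.mem_insert_of_mem hx)
    have h3 : Nat.lcm a (s.lcm id) ≠ 0 := Nat.lcm_ne_zero h1 h2
    intro h
    exact h3 (by rw [show Nat.lcm a (s.lcm id) = lcm (id a) (s.lcm id) from rfl, h])

lemma Ln_ne_zero (n : ℕ) : Ln n ≠ 0 :=
  lcm_ne_zero_of _ fun x hx => by have := (Finset.mem_Icc.1 hx).1; omega

lemma not_pow_dvd_lcm {q c : ℕ} (hq : q.Prime) (hc : 1 ≤ c) :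
    ∀ (s : Finset ℕ), (∀ x ∈ s, x ≠ 0) → (∀ x ∈ s, ¬ q ^ c ∣ x) → ¬ q ^ c ∣ s.lcm id := by
  classical
  intro s
  induction s using Finset.induction_on with
  | empty =>
    intro _ _ h
    rw [Finset.lcm_empty] at h
    have := Nat.le_of_dvd one_pos h
    have : 2 ≤ q ^ c := by
      calc 2 ≤ q := hq.two_le
      _ = q ^ 1 := (pow_one q).symm
      _ ≤ q ^ c := Nat.pow_le_pow_right hq.pos hc
    omega
  | @insert a s ha ih =>
    intro h0 hb hdvd
    rw [Finset.lcm_insert] at hdvd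
    have h1 : a ≠ 0 := h0 a (Finset.mem_insert_self _ _)
    have h2 : s.lcm id ≠ 0 := lcm_ne_zero_of s fun x hx => h0 x (Finset.mem_insert_of_mem hx)
    simp only [id_eq] at hdvd
    rw [show lcm a (s.lcm id) = Nat.lcm a (s.lcm id) from rfl,
      (Nat.Prime.pow_dvd_iff_le_factorization hq (Nat.lcm_ne_zero h1 h2)),
      Nat.factorization_lcm h1 h2, Finsupp.sup_apply] at hdvd
    rcases le_sup_iff.1 hdvd with h | h
    · exact hb a (Finset.mem_insert_self _ _)
        ((Nat.Prime.pow_dvd_iff_le_factorization hq h1).2 h)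
    · exact ih (fun x hx => h0 x (Finset.mem_insert_of_mem hx))
        (fun x hx => hb x (Finset.mem_insert_of_mem hx))
        ((Nat.Prime.pow_dvd_iff_le_factorization hq h2).2 h)

lemma not_dvd_Ln {q m : ℕ} (hq : q.Prime) (hqm : m < q) : ¬ q ∣ Ln m := by
  have := not_pow_dvd_lcm hq le_rfl (Finset.Icc 1 m)
    (fun x hx => by have := (Finset.mem_Icc.1 hx).1; omega)
    (fun x hx => by
      have h2 := (Finset.mem_Icc.1 hx).2
      intro hdvd
      have := Nat.le_of_dvd (by have := (Finset.mem_Icc.1 hx).1; omega) hdvd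
      simp only [pow_one] at this
      omega)
  simp only [pow_one] at this
  exact this

lemma not_sq_dvd_Ln {q n : ℕ} (hq : q.Prime) (hn : n < q ^ 2) : ¬ q ^ 2 ∣ Ln n := by
  exact not_pow_dvd_lcm hq (by omega) (Finset.Icc 1 n)
    (fun x hx => by have := (Finset.mem_Icc.1 hx).1; omega)
    (fun x hx => by
      have h2 := (Finset.mem_Icc.1 hx).2
      intro hdvd
      have := Nat.le_of_dvd (by have := (Finset.mem_Icc.1 hx).1; omega) hdvd
      omega)

lemma cast_ne_zero_of_lt {j q : ℕ} (hq : q.Prime) (h1 : 1 ≤ j) (h2 : j < q) :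
    (j : ZMod q) ≠ 0 := by
  rw [Ne, ZMod.natCast_eq_zero_iff]
  intro hdvd
  have := Nat.le_of_dvd (by omega) hdvd
  omega

lemma cast_div_eq {a j q : ℕ} [Fact q.Prime] (hdvd : j ∣ a) (hj : (j : ZMod q) ≠ 0) :
    ((a / j : ℕ) : ZMod q) = (a : ZMod q) * ((j : ZMod q))⁻¹ := by
  have hj0 : j ≠ 0 := by rintro rfl; simp at hj
  obtain ⟨t, rfl⟩ := hdvd
  rw [Nat.mul_div_cancel_left t (Nat.pos_of_ne_zero hj0)]
  push_cast
  field_simp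

/-! ### The concrete polynomials -/

noncomputable def gP (n : ℕ) : Polynomial ℤ := ∑ i ∈ Finset.range n, X ^ i

noncomputable def fP (n : ℕ) : Polynomial ℤ :=
  C ((Ln n : ℤ)) + ∑ k ∈ Finset.Icc 1 n, C (((Ln n / k : ℕ) : ℤ)) * X ^ k

noncomputable def fM (m : ℕ) : Polynomial ℤ :=
  ∑ j ∈ Finset.Icc 1 m, C (((Ln m / j : ℕ) : ℤ)) * X ^ j

noncomputable def hpoly (m q : ℕ) : Polynomial (ZMod q) :=
  ∑ j ∈ Finset.Icc 1 m, C (((j : ZMod q))⁻¹) * X ^ j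

lemma gP_monic {n : ℕ} (hn : 0 < n) : (gP n).Monic :=
  monic_geom_sum_X hn.ne'

lemma gP_natDegree {n : ℕ} (hn : 0 < n) : (gP n).natDegree = n - 1 := by
  have h : (gP n) * (X - C 1) = X ^ n - C 1 := by
    have := geom_sum_mul (X : ℤ[X]) n
    simpa [gP] using this
  have h2 : ((gP n) * (X - C 1)).natDegree = n := by
    rw [h, natDegree_X_pow_sub_C]
  rw [Monic.natDegree_mul (gP_monic hn) (monic_X_sub_C 1), natDegree_X_sub_C] at h2
  omega

lemma gP_map {S : Type*} [CommRing S] (φ : ℤ →+* S) (n : ℕ) :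
    (gP n).map φ = ∑ i ∈ Finset.range n, X ^ i := by
  simp [gP, Polynomial.map_sum, Polynomial.map_pow]

lemma gP_map_monic {S : Type*} [CommRing S] [Nontrivial S] (φ : ℤ →+* S) {n : ℕ} (hn : 0 < n) :
    ((gP n).map φ).Monic := by
  rw [gP_map]
  exact monic_geom_sum_X hn.ne'

lemma gP_map_natDegree {S : Type*} [CommRing S] [Nontrivial S] (φ : ℤ →+* S) {n : ℕ}
    (hn : 0 < n) : ((gP n).map φ).natDegree = n - 1 := by
  rw [(gP_monic hn).natDegree_map φ, gP_natDegree hn]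


/-! ### Complex-side evaluation -/

lemma prod_primroot {m : ℕ} (hm : 0 < m) {ω : ℂ} (hω : IsPrimitiveRoot ω m)
    {M : Type*} [CommMonoid M] (G : ℂ → M) :
    ∏ i : Fin (m - 1), G (ω ^ ((i : ℕ) + 1)) = ∏ θ ∈ (nthRootsFinset m (1 : ℂ)).erase 1, G θ := by
  haveI : NeZero m := ⟨hm.ne'⟩
  refine Finset.prod_bij (fun i _ => ω ^ ((i : ℕ) + 1)) ?_ ?_ ?_ ?_
  · intro i _
    refine Finset.mem_erase.2 ⟨?_, (mem_nthRootsFinset hm 1).2 ?_⟩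
    · intro h1
      have hd := (hω.pow_eq_one_iff_dvd ((i : ℕ) + 1)).1 h1
      have hi := i.isLt
      have := Nat.le_of_dvd (by omega) hd
      omega
    · rw [← pow_mul, mul_comm, pow_mul, hω.pow_eq_one, one_pow]
  · intro a _ b _ h
    have ha := a.isLt
    have hb := b.isLt
    have := hω.pow_inj (by omega : (a : ℕ) + 1 < m) (by omega : (b : ℕ) + 1 < m) h
    exact Fin.ext (by omega)
  · intro θ hθ
    obtain ⟨hne, hmem⟩ := Finset.mem_erase.1 hθ
    obtain ⟨i, him, hi⟩ := hω.eq_pow_of_pow_eq_one ((mem_nthRootsFinset hm 1).1 hmem)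
    have hi0 : i ≠ 0 := by
      rintro rfl
      rw [pow_zero] at hi
      exact hne hi.symm
    refine ⟨⟨i - 1, by omega⟩, Finset.mem_univ _, ?_⟩
    simpa [Nat.sub_add_cancel (by omega : 1 ≤ i)] using hi
  · intros; rfl

lemma gP_factor {m : ℕ} (hm : 0 < m) {ω : ℂ} (hω : IsPrimitiveRoot ω m) :
    (gP m).map (Int.castRingHom ℂ) = ∏ i : Fin (m - 1), (X - C (ω ^ ((i : ℕ) + 1))) := by
  have h1 : (1 : ℂ) ∈ nthRootsFinset m (1 : ℂ) := (mem_nthRootsFinset hm 1).2 (one_pow m)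
  have hfull : (X : ℂ[X]) ^ m - 1 = ∏ θ ∈ nthRootsFinset m (1 : ℂ), (X - C θ) :=
    X_pow_sub_one_eq_prod hm hω
  have hsplit : ∏ θ ∈ nthRootsFinset m (1 : ℂ), (X - C θ)
      = (X - C 1) * ∏ θ ∈ (nthRootsFinset m (1 : ℂ)).erase 1, (X - C θ) :=
    (Finset.mul_prod_erase _ _ h1).symm
  have hgeom : ((gP m).map (Int.castRingHom ℂ)) * (X - C 1) = (X : ℂ[X]) ^ m - 1 := by
    rw [gP_map]
    simpa using geom_sum_mul (X : ℂ[X]) m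
  have hkey : (X - C 1) * ((gP m).map (Int.castRingHom ℂ))
      = (X - C 1) * ∏ θ ∈ (nthRootsFinset m (1 : ℂ)).erase 1, (X - C θ) := by
    rw [mul_comm (X - C 1), hgeom, hfull, hsplit]
  have hX1 : (X - C (1 : ℂ)) ≠ 0 := X_sub_C_ne_zero 1
  have := mul_left_cancel₀ hX1 hkey
  rw [this]
  exact (prod_primroot hm hω (fun θ => X - C θ)).symm

lemma e_inj {m : ℕ} {ω : ℂ} (hω : IsPrimitiveRoot ω m) :
    Function.Injective (fun i : Fin (m - 1) => ω ^ ((i : ℕ) + 1)) := by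
  intro a b h
  have ha := a.isLt
  have hb := b.isLt
  have hm : 0 < m := by omega
  have := hω.pow_inj (by omega : (a : ℕ) + 1 < m) (by omega : (b : ℕ) + 1 < m) h
  exact Fin.ext (by omega)

lemma det_complex_eq {m : ℕ} (hm : 0 < m) {ω : ℂ} (hω : IsPrimitiveRoot ω m) (f : ℤ[X]) :
    (((Mmat f (gP m) (m - 1)).det : ℤ) : ℂ)
      = ∏ i : Fin (m - 1), (f.map (Int.castRingHom ℂ)).eval (ω ^ ((i : ℕ) + 1)) := by
  have hcast : (((Mmat f (gP m) (m - 1)).det : ℤ) : ℂ)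
      = ((Mmat f (gP m) (m - 1)).map (Int.castRingHom ℂ)).det := by
    have h := RingHom.map_det (Int.castRingHom ℂ) (Mmat f (gP m) (m - 1))
    simpa [RingHom.mapMatrix_apply] using h
  rw [hcast, Mmat_map _ _ _ (gP_monic hm)]
  exact Mmat_det_eq_prod (gP_map_monic _ hm) (gP_map_natDegree _ hm) (e_inj hω)
    (gP_factor hm hω) _


lemma fP_eval_complex (n : ℕ) (θ : ℂ) :
    ((fP n).map (Int.castRingHom ℂ)).eval θ = (Polynomial.aeval θ) (Ftilde n) := by
  have hLHS : ((fP n).map (Int.castRingHom ℂ)).eval θ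
      = (Ln n : ℂ) + ∑ k ∈ Finset.Icc 1 n, ((Ln n / k : ℕ) : ℂ) * θ ^ k := by
    rw [fP]
    simp only [Polynomial.map_add, Polynomial.map_sum, Polynomial.map_mul, Polynomial.map_pow,
      Polynomial.map_C, Polynomial.map_X, eval_add, eval_finset_sum, eval_mul, eval_pow,
      eval_X, eval_C, eq_intCast, Int.cast_natCast, Polynomial.map_intCast,
      Polynomial.map_natCast, Polynomial.eval_intCast, Polynomial.eval_natCast]
  have hRHS : (Polynomial.aeval θ) (Ftilde n)
      = (Ln n : ℂ) * (1 + ∑ k ∈ Finset.Icc 1 n, ((k : ℂ))⁻¹ * θ ^ k) := by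
    rw [Ftilde, F]
    simp only [_root_.map_add, _root_.map_mul, _root_.map_one, map_sum, _root_.map_pow,
      aeval_C, aeval_X, eq_ratCast, Rat.cast_natCast, Rat.cast_inv]
  rw [hLHS, hRHS, mul_add, mul_one, Finset.mul_sum]
  congr 1
  refine Finset.sum_congr rfl fun k hk => ?_
  obtain ⟨hk1, hk2⟩ := Finset.mem_Icc.1 hk
  have hkd : k ∣ Ln n := dvd_Ln hk1 hk2
  have hkc : ((k : ℕ) : ℂ) ≠ 0 := Nat.cast_ne_zero.2 (by omega)
  have hdiv : (((Ln n / k : ℕ) : ℂ)) = (Ln n : ℂ) / (k : ℂ) := Nat.cast_div hkd hkc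
  rw [hdiv]
  field_simp

lemma fM_eval {m : ℕ} (hm : 0 < m) {θ : ℂ} (hθ : θ ^ m = 1) :
    ((fM m).map (Int.castRingHom ℂ)).eval θ
      = (Ln m : ℂ) * ((m : ℂ)⁻¹ + ∑ j ∈ Finset.Icc 1 (m - 1), θ ^ j / (j : ℂ)) := by
  have hLHS : ((fM m).map (Int.castRingHom ℂ)).eval θ
      = ∑ j ∈ Finset.Icc 1 m, ((Ln m / j : ℕ) : ℂ) * θ ^ j := by
    rw [fM]
    simp only [Polynomial.map_sum, Polynomial.map_mul, Polynomial.map_pow, Polynomial.map_C,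
      Polynomial.map_X, eval_finset_sum, eval_mul, eval_pow, eval_X, eval_C, eq_intCast,
      Int.cast_natCast, Polynomial.map_intCast, Polynomial.map_natCast,
      Polynomial.eval_intCast, Polynomial.eval_natCast]
  rw [hLHS]
  have hsplit : Finset.Icc 1 m = insert m (Finset.Icc 1 (m - 1)) := by
    ext k
    simp only [Finset.mem_Icc, Finset.mem_insert]
    omega
  have hnotmem : m ∉ Finset.Icc 1 (m - 1) := by
    simp only [Finset.mem_Icc]
    omega
  rw [hsplit, Finset.sum_insert hnotmem, mul_add, Finset.mul_sum]
  have hmc : ((m : ℕ) : ℂ) ≠ 0 := Nat.cast_ne_zero.2 (by omega)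
  congr 1
  · have hmd : m ∣ Ln m := dvd_Ln (by omega) le_rfl
    have hdiv : (((Ln m / m : ℕ) : ℂ)) = (Ln m : ℂ) / (m : ℂ) := Nat.cast_div hmd hmc
    rw [hdiv, hθ]
    field_simp
  · refine Finset.sum_congr rfl fun j hj => ?_
    obtain ⟨hj1, hj2⟩ := Finset.mem_Icc.1 hj
    have hjd : j ∣ Ln m := dvd_Ln hj1 (by omega)
    have hjc : ((j : ℕ) : ℂ) ≠ 0 := Nat.cast_ne_zero.2 (by omega)
    have hdiv : (((Ln m / j : ℕ) : ℂ)) = (Ln m : ℂ) / (j : ℂ) := Nat.cast_div hjd hjc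
    rw [hdiv]
    field_simp

lemma z_complex {n : ℕ} (hn : 0 < n) :
    (((Mmat (fP n) (gP n) (n - 1)).det : ℤ) : ℂ) = P n := by
  obtain prim := Complex.isPrimitiveRoot_exp n hn.ne'
  rw [det_complex_eq hn prim,
    prod_primroot hn prim (fun θ => ((fP n).map (Int.castRingHom ℂ)).eval θ), P]
  exact Finset.prod_congr rfl fun θ _ => fP_eval_complex n θ

lemma zm_complex {m : ℕ} (hm : 0 < m) {ω : ℂ} (hω : IsPrimitiveRoot ω m) :
    (((Mmat (fM m) (gP m) (m - 1)).det : ℤ) : ℂ) = (Ln m : ℂ) ^ (m - 1) * Xc m ω := by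
  rw [det_complex_eq hm hω]
  have heach : ∀ i : Fin (m - 1), ((fM m).map (Int.castRingHom ℂ)).eval (ω ^ ((i : ℕ) + 1))
      = (Ln m : ℂ) * ((m : ℂ)⁻¹ + ∑ j ∈ Finset.Icc 1 (m - 1),
          ω ^ (j * ((i : ℕ) + 1)) / (j : ℂ)) := by
    intro i
    have hθ : (ω ^ ((i : ℕ) + 1)) ^ m = 1 := by
      rw [← pow_mul, mul_comm, pow_mul, hω.pow_eq_one, one_pow]
    rw [fM_eval hm hθ]
    congr 2
    refine Finset.sum_congr rfl fun j _ => ?_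
    rw [← pow_mul, mul_comm ((i : ℕ) + 1) j]
  rw [Finset.prod_congr rfl (fun i _ => heach i), Finset.prod_mul_distrib, Finset.prod_const]
  congr 1
  · simp
  · rw [Xc]
    refine Finset.prod_bij (fun (i : Fin (m - 1)) _ => (i : ℕ) + 1) ?_ ?_ ?_ ?_
    · intro i _
      have := i.isLt
      simp only [Finset.mem_Icc]
      omega
    · intro a _ b _ h
      have hab : (a : ℕ) = (b : ℕ) := by simpa using h
      exact Fin.ext hab
    · intro k hk
      obtain ⟨h1, h2⟩ := Finset.mem_Icc.1 hk
      refine ⟨⟨k - 1, by omega⟩, Finset.mem_univ _, by simp; omega⟩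
    · intros; rfl

lemma zm_not_dvd {m q : ℕ} (hq : q.Prime) (hqm : m < q) (hm : 0 < m)
    {ω : ℂ} (hω : IsPrimitiveRoot ω m) {x : ℚ} (hxc : (x : ℂ) = Xc m ω) (hx0 : x ≠ 0)
    (hxval : padicValRat q x = 0) : ¬ ((q : ℤ) ∣ (Mmat (fM m) (gP m) (m - 1)).det) := by
  haveI : Fact q.Prime := ⟨hq⟩
  set z := (Mmat (fM m) (gP m) (m - 1)).det with hz
  have hrat : (z : ℚ) = ((Ln m : ℚ)) ^ (m - 1) * x := by
    have h1 : ((z : ℚ) : ℂ) = ((((Ln m : ℚ)) ^ (m - 1) * x : ℚ) : ℂ) := by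
      push_cast
      rw [zm_complex hm hω, hxc]
    exact Rat.cast_injective h1
  have hLm : ¬ q ∣ Ln m := not_dvd_Ln hq hqm
  have hLm0 : ((Ln m : ℚ)) ≠ 0 := Nat.cast_ne_zero.2 (Ln_ne_zero m)
  have hz0 : z ≠ 0 := by
    intro h
    rw [h] at hrat
    exact (mul_ne_zero (pow_ne_zero _ hLm0) hx0) (by exact_mod_cast hrat.symm)
  intro hdvd
  have hval : padicValRat q (z : ℚ) = 0 := by
    rw [hrat, padicValRat.mul (pow_ne_zero _ hLm0) hx0, hxval]
    have hcast : ((Ln m : ℚ)) ^ (m - 1) = ((Ln m ^ (m - 1) : ℕ) : ℚ) := by push_cast; ring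
    rw [hcast, padicValRat.of_nat]
    have h0 : padicValNat q (Ln m ^ (m - 1)) = 0 :=
      padicValNat.eq_zero_of_not_dvd (fun hd => hLm (hq.dvd_of_dvd_pow hd))
    simp [h0]
  have h1 : 1 ≤ padicValRat q (z : ℚ) := by
    have hnat : q ∣ z.natAbs := Int.natCast_dvd.1 hdvd
    have hle := one_le_padicValNat_of_dvd (Int.natAbs_ne_zero.2 hz0) hnat
    rw [padicValRat.of_int, padicValInt]
    exact_mod_cast hle
  omega


/-! ### ZMod side -/

lemma fP_map_zmod {m q : ℕ} [Fact q.Prime] (hq : q.Prime) (hm : 0 < m) (hqm : m < q) :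
    (fP (m * q)).map (Int.castRingHom (ZMod q))
      = C (((Ln (m * q) / q : ℕ) : ZMod q)) * hpoly m q ^ q := by
  set n := m * q with hn
  have hq1 : 1 ≤ q := hq.pos
  have hqn : q ≤ n := by
    rw [hn]
    calc q = 1 * q := (one_mul q).symm
    _ ≤ m * q := Nat.mul_le_mul_right q hm
  have hqLn : q ∣ Ln n := dvd_Ln hq1 hqn
  have step1 : (fP n).map (Int.castRingHom (ZMod q))
      = ∑ k ∈ Finset.Icc 1 n, C (((Ln n / k : ℕ) : ZMod q)) * X ^ k := by
    rw [fP, Polynomial.map_add]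
    have h1 : (C ((Ln n : ℤ))).map (Int.castRingHom (ZMod q)) = 0 := by
      rw [Polynomial.map_C]
      have h0 : ((Ln n : ℤ) : ZMod q) = 0 := by
        rw [ZMod.intCast_zmod_eq_zero_iff_dvd]
        exact_mod_cast hqLn
      rw [eq_intCast, h0, Polynomial.C_0]
    rw [h1, zero_add, Polynomial.map_sum]
    refine Finset.sum_congr rfl fun k _ => ?_
    rw [Polynomial.map_mul, Polynomial.map_C, Polynomial.map_pow, Polynomial.map_X,
      eq_intCast, Int.cast_natCast]
  set S' : Finset ℕ := (Finset.Icc 1 m).image (fun j => q * j) with hS'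
  have hsub : S' ⊆ Finset.Icc 1 n := by
    intro k hk
    obtain ⟨j, hj, rfl⟩ := Finset.mem_image.1 hk
    obtain ⟨hj1, hj2⟩ := Finset.mem_Icc.1 hj
    rw [Finset.mem_Icc, hn]
    constructor
    · nlinarith
    · calc q * j ≤ q * m := Nat.mul_le_mul_left q hj2
      _ = m * q := mul_comm q m
  have hvanish : ∀ k ∈ Finset.Icc 1 n, k ∉ S' →
      C (((Ln n / k : ℕ) : ZMod q)) * X ^ k = 0 := by
    intro k hk hknot
    obtain ⟨hk1, hk2⟩ := Finset.mem_Icc.1 hk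
    have hnd : ¬ q ∣ k := by
      intro hdvd
      apply hknot
      rw [hS', Finset.mem_image]
      refine ⟨k / q, ?_, Nat.mul_div_cancel' hdvd⟩
      rw [Finset.mem_Icc]
      constructor
      · have : q ≤ k := Nat.le_of_dvd (by omega) hdvd
        exact Nat.one_le_div_iff hq.pos |>.2 this
      · rw [hn] at hk2
        exact Nat.div_le_of_le_mul (by rw [mul_comm]; exact hk2)
    have hco : Nat.Coprime q k := (hq.coprime_iff_not_dvd).2 hnd
    have hk_dvd : k ∣ Ln n := dvd_Ln hk1 hk2
    have hqk : q * k ∣ Ln n := Nat.Coprime.mul_dvd_of_dvd_of_dvd hco hqLn hk_dvd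
    obtain ⟨t, ht⟩ := hqk
    have hdivk : Ln n / k = q * t := by
      rw [ht, show q * k * t = k * (q * t) by ring, Nat.mul_div_cancel_left _ (by omega : 0 < k)]
    rw [hdivk]
    have : ((q * t : ℕ) : ZMod q) = 0 := by
      rw [ZMod.natCast_eq_zero_iff]
      exact ⟨t, rfl⟩
    rw [this, Polynomial.C_0, zero_mul]
  have step2 : ∑ k ∈ Finset.Icc 1 n, C (((Ln n / k : ℕ) : ZMod q)) * X ^ k
      = ∑ k ∈ S', C (((Ln n / k : ℕ) : ZMod q)) * X ^ k :=
    (Finset.sum_subset hsub hvanish).symm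
  have hinj : ∀ a ∈ Finset.Icc 1 m, ∀ b ∈ Finset.Icc 1 m, q * a = q * b → a = b := by
    intro a _ b _ h
    exact Nat.eq_of_mul_eq_mul_left hq.pos h
  have step3 : ∑ k ∈ S', C (((Ln n / k : ℕ) : ZMod q)) * X ^ k
      = ∑ j ∈ Finset.Icc 1 m, C (((Ln n / (q * j) : ℕ) : ZMod q)) * X ^ (q * j) := by
    rw [hS', Finset.sum_image hinj]
  have step4 : ∀ j ∈ Finset.Icc 1 m, C (((Ln n / (q * j) : ℕ) : ZMod q)) * X ^ (q * j)
      = C ((((Ln n / q : ℕ) : ZMod q)) * ((j : ZMod q))⁻¹) * X ^ (j * q) := by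
    intro j hj
    obtain ⟨hj1, hj2⟩ := Finset.mem_Icc.1 hj
    have hjn : j ≤ n := by
      rw [hn]
      calc j ≤ m := hj2
      _ = m * 1 := (mul_one m).symm
      _ ≤ m * q := Nat.mul_le_mul_left m hq.pos
    have hnd : ¬ q ∣ j := by
      intro hdvd
      have := Nat.le_of_dvd (by omega) hdvd
      omega
    have hco : Nat.Coprime q j := (hq.coprime_iff_not_dvd).2 hnd
    have hqj : q * j ∣ Ln n :=
      Nat.Coprime.mul_dvd_of_dvd_of_dvd hco hqLn (dvd_Ln hj1 hjn)
    obtain ⟨t, ht⟩ := hqj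
    have hd1 : Ln n / (q * j) = t := by
      rw [ht, Nat.mul_div_cancel_left _ (by positivity : 0 < q * j)]
    have hd2 : Ln n / q = j * t := by
      rw [ht, mul_assoc, Nat.mul_div_cancel_left _ hq.pos]
    have hjne : ((j : ZMod q)) ≠ 0 := cast_ne_zero_of_lt hq hj1 (by omega)
    rw [hd1, hd2, mul_comm q j]
    congr 1
    push_cast
    field_simp
  have stepRHS : C (((Ln n / q : ℕ) : ZMod q)) * hpoly m q ^ q
      = ∑ j ∈ Finset.Icc 1 m, C ((((Ln n / q : ℕ) : ZMod q)) * ((j : ZMod q))⁻¹) * X ^ (j * q) := by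
    rw [hpoly, sum_pow_char, Finset.mul_sum]
    refine Finset.sum_congr rfl fun j _ => ?_
    rw [mul_pow, ← map_pow, ZMod.pow_card, ← pow_mul, ← mul_assoc, ← C_mul]
  rw [step1, step2, step3, Finset.sum_congr rfl step4, stepRHS]

lemma hpoly_one_ne {m q : ℕ} [Fact q.Prime] (hq : q.Prime) (hm : 0 < m) (hqm : m < q)
    (hY1 : Y m ≠ 0) (hY2 : padicValRat q (Y m) = 0) :
    (∑ j ∈ Finset.Icc 1 m, ((j : ZMod q))⁻¹) ≠ 0 := by
  set A : ℕ := ∑ j ∈ Finset.Icc 1 m, Ln m / j with hA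
  have hrat : (A : ℚ) = Y m * (Ln m : ℚ) := by
    rw [hA, Y, Nat.cast_sum, Finset.sum_mul]
    refine Finset.sum_congr rfl fun j hj => ?_
    obtain ⟨h1, h2⟩ := Finset.mem_Icc.1 hj
    rw [Nat.cast_div (dvd_Ln h1 h2) (by exact_mod_cast Nat.cast_ne_zero.2 (by omega : j ≠ 0))]
    rw [div_eq_mul_inv, mul_comm]
  have hLm0 : ((Ln m : ℚ)) ≠ 0 := Nat.cast_ne_zero.2 (Ln_ne_zero m)
  have hA0 : A ≠ 0 := by
    intro h
    rw [h] at hrat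
    have : Y m * (Ln m : ℚ) ≠ 0 := mul_ne_zero hY1 hLm0
    exact this (by exact_mod_cast hrat.symm)
  have hnotdvd : ¬ q ∣ A := by
    intro hdvd
    have hle := one_le_padicValNat_of_dvd hA0 hdvd
    have hv : padicValRat q (A : ℚ) = 0 := by
      rw [hrat, padicValRat.mul hY1 hLm0, hY2, padicValRat.of_nat,
        padicValNat.eq_zero_of_not_dvd (not_dvd_Ln hq hqm)]
      simp
    rw [padicValRat.of_nat] at hv
    omega
  have hcast : (A : ZMod q) = (Ln m : ZMod q) * ∑ j ∈ Finset.Icc 1 m, ((j : ZMod q))⁻¹ := by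
    rw [hA, Nat.cast_sum, Finset.mul_sum]
    refine Finset.sum_congr rfl fun j hj => ?_
    obtain ⟨h1, h2⟩ := Finset.mem_Icc.1 hj
    exact cast_div_eq (dvd_Ln h1 h2) (cast_ne_zero_of_lt hq h1 (by omega))
  intro h0
  rw [h0, mul_zero] at hcast
  exact hnotdvd ((ZMod.natCast_eq_zero_iff _ _).1 hcast)

lemma no_common_root {m q : ℕ} [Fact q.Prime] (hq : q.Prime) (hm : 0 < m) (hqm : m < q)
    {ω : ℂ} (hω : IsPrimitiveRoot ω m) {x : ℚ} (hxc : (x : ℂ) = Xc m ω) (hx0 : x ≠ 0)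
    (hxval : padicValRat q x = 0) (hY1 : Y m ≠ 0) (hY2 : padicValRat q (Y m) = 0)
    (μ : AlgebraicClosure (ZMod q)) (hμm : μ ^ m = 1)
    (hroot : (Polynomial.aeval μ) (hpoly m q) = 0) : False := by
  have hainj : Function.Injective (algebraMap (ZMod q) (AlgebraicClosure (ZMod q))) := (algebraMap (ZMod q) (AlgebraicClosure (ZMod q))).injective
  have haeval : (Polynomial.aeval μ) (hpoly m q)
      = ∑ j ∈ Finset.Icc 1 m, algebraMap (ZMod q) (AlgebraicClosure (ZMod q)) (((j : ZMod q))⁻¹) * μ ^ j := by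
    rw [hpoly]
    simp only [map_sum, _root_.map_mul, _root_.map_pow, aeval_C, aeval_X]
  by_cases hμ1 : μ = 1
  · have h := hroot
    rw [haeval, hμ1] at h
    have h2 : algebraMap (ZMod q) (AlgebraicClosure (ZMod q)) (∑ j ∈ Finset.Icc 1 m, ((j : ZMod q))⁻¹) = 0 := by
      rw [map_sum]
      simpa using h
    exact (hpoly_one_ne hq hm hqm hY1 hY2) (hainj (by rw [h2, map_zero]))
  · have hm2 : 2 ≤ m := by
      rcases Nat.lt_or_ge m 2 with h | h
      · exfalso
        have hm1 : m = 1 := by omega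
        rw [hm1, pow_one] at hμm
        exact hμ1 hμm
      · exact h
    set z := (Mmat (fM m) (gP m) (m - 1)).det with hzdef
    have hznd : ¬ ((q : ℤ) ∣ z) := zm_not_dvd hq hqm hm hω hxc hx0 hxval
    set φK := Int.castRingHom (AlgebraicClosure (ZMod q)) with hφK
    have hgmonic := gP_map_monic φK hm
    have hgdeg := gP_map_natDegree φK hm
    have hg1 : (gP m).map φK ≠ 1 := by
      intro h
      rw [h, natDegree_one] at hgdeg
      omega
    set MK := Mmat ((fM m).map φK) ((gP m).map φK) (m - 1) with hMK
    have hdetK : MK.det = φK z := by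
      have h := RingHom.map_det φK (Mmat (fM m) (gP m) (m - 1))
      rw [hMK, ← Mmat_map φK _ _ (gP_monic hm)]
      simpa [RingHom.mapMatrix_apply] using h.symm
    have hdetK0 : MK.det ≠ 0 := by
      rw [hdetK]
      intro h
      have hz0 : ((z : ℤ) : ZMod q) ≠ 0 := by
        rw [Ne, ZMod.intCast_zmod_eq_zero_iff_dvd]
        exact hznd
      have hcomm : algebraMap (ZMod q) (AlgebraicClosure (ZMod q)) ((z : ZMod q)) = φK z := by
        rw [map_intCast, hφK, eq_intCast]
      exact hz0 (hainj (by rw [hcomm, h, map_zero]))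
    set w : Fin (m - 1) → (AlgebraicClosure (ZMod q)) := fun j => μ ^ (j : ℕ) with hw
    have hw0 : w ≠ 0 := by
      intro h
      have := congrFun h ⟨0, by omega⟩
      simp [hw] at this
    have hgval : Polynomial.eval μ ((gP m).map φK) = 0 := by
      rw [gP_map]
      have hgs := geom_sum_mul μ m
      rw [hμm, sub_self] at hgs
      have hne : μ - 1 ≠ 0 := sub_ne_zero.2 hμ1
      rcases mul_eq_zero.1 hgs with h | h
      · simpa using h
      · exact absurd h hne
    have hfval : Polynomial.eval μ ((fM m).map φK) = 0 := by
      have hLHS : Polynomial.eval μ ((fM m).map φK)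
          = ∑ j ∈ Finset.Icc 1 m, ((Ln m / j : ℕ) : AlgebraicClosure (ZMod q)) * μ ^ j := by
        rw [fM]
        simp only [Polynomial.map_sum, Polynomial.map_mul, Polynomial.map_pow, Polynomial.map_C,
          Polynomial.map_X, eval_finset_sum, eval_mul, eval_pow, eval_X, eval_C, eq_intCast,
          Int.cast_natCast, Polynomial.map_intCast, Polynomial.map_natCast,
          Polynomial.eval_intCast, Polynomial.eval_natCast]
      rw [hLHS]
      have hterm : ∀ j ∈ Finset.Icc 1 m, ((Ln m / j : ℕ) : AlgebraicClosure (ZMod q)) * μ ^ j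
          = algebraMap (ZMod q) (AlgebraicClosure (ZMod q)) ((Ln m : ZMod q))
              * (algebraMap (ZMod q) (AlgebraicClosure (ZMod q)) (((j : ZMod q))⁻¹) * μ ^ j) := by
        intro j hj
        obtain ⟨h1, h2⟩ := Finset.mem_Icc.1 hj
        have hcd := cast_div_eq (q := q) (dvd_Ln h1 h2) (cast_ne_zero_of_lt hq h1 (by omega))
        have hc : ((Ln m / j : ℕ) : AlgebraicClosure (ZMod q)) = algebraMap (ZMod q) (AlgebraicClosure (ZMod q)) (((Ln m / j : ℕ) : ZMod q)) :=
          (map_natCast (algebraMap (ZMod q) (AlgebraicClosure (ZMod q))) _).symm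
        rw [hc, hcd, _root_.map_mul]
        ring
      rw [Finset.sum_congr rfl hterm, ← Finset.mul_sum, ← haeval, hroot, mul_zero]
    have hmul : MK.mulVec w = 0 := by
      funext i
      simp only [Matrix.mulVec, dotProduct, Pi.zero_apply]
      have h1 : (((fM m).map φK * X ^ (i : ℕ)) %ₘ ((gP m).map φK)).natDegree < m - 1 := by
        have := natDegree_modByMonic_lt ((fM m).map φK * X ^ (i : ℕ)) hgmonic hg1
        omega
      have hsum : ∑ j, MK i j * w j
          = Polynomial.eval μ (((fM m).map φK * X ^ (i : ℕ)) %ₘ ((gP m).map φK)) := by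
        conv_rhs => rw [poly_eq_sum_fin h1]
        rw [eval_finset_sum]
        refine Finset.sum_congr rfl fun k _ => ?_
        simp [hMK, Mmat, hw]
      rw [hsum]
      have h2 : Polynomial.eval μ (((fM m).map φK * X ^ (i : ℕ)) %ₘ ((gP m).map φK))
          = Polynomial.eval μ ((fM m).map φK * X ^ (i : ℕ)) := by
        conv_rhs => rw [← modByMonic_add_div ((fM m).map φK * X ^ (i : ℕ)) ((gP m).map φK)]
        simp [hgval]
      rw [h2, eval_mul, hfval, zero_mul]
    exact hdetK0 (Matrix.exists_mulVec_eq_zero_iff.1 ⟨w, hw0, hmul⟩)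

end Stmt10aux

/-- Fix `m ≥ 1` and a prime `q > m` with `gcd(q, m) = 1`, and set `n = m*q`.
If `X(m)` and `Y(m)` are rationals of `q`-adic valuation 0, then the integer `𝒫 n` is not
divisible by `q`. -/
theorem stmt10 (m q n : ℕ) (hm : 0 < m) (hq : q.Prime) (hqm : m < q)
    (hgcd : Nat.gcd q m = 1) (hn : n = m * q) (ω : ℂ) (hω : IsPrimitiveRoot ω m)
    (hX : ∃ x : ℚ, (x : ℂ) = Xc m ω ∧ x ≠ 0 ∧ padicValRat q x = 0)
    (hY : Y m ≠ 0 ∧ padicValRat q (Y m) = 0) :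
    ∃ z : ℤ, (z : ℂ) = P n ∧ ¬ ((q : ℤ) ∣ z) := by
  classical
  haveI : Fact q.Prime := ⟨hq⟩
  subst hn
  obtain ⟨x, hxc, hx0, hxval⟩ := hX
  obtain ⟨hY1, hY2⟩ := hY
  have hn0 : 0 < m * q := Nat.mul_pos hm hq.pos
  open Stmt10aux in
  refine ⟨(Stmt10aux.Mmat (Stmt10aux.fP (m * q)) (Stmt10aux.gP (m * q)) (m * q - 1)).det,
    Stmt10aux.z_complex hn0, ?_⟩
  intro hdvd
  set ψ := Int.castRingHom (ZMod q) with hψ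
  set z := (Stmt10aux.Mmat (Stmt10aux.fP (m * q)) (Stmt10aux.gP (m * q)) (m * q - 1)).det
    with hzdef
  have hcast0 : ((z : ℤ) : ZMod q) = 0 := (ZMod.intCast_zmod_eq_zero_iff_dvd _ _).2 hdvd
  have hdet : (Stmt10aux.Mmat ((Stmt10aux.fP (m * q)).map ψ) ((Stmt10aux.gP (m * q)).map ψ)
      (m * q - 1)).det = 0 := by
    have h := RingHom.map_det ψ (Stmt10aux.Mmat (Stmt10aux.fP (m * q)) (Stmt10aux.gP (m * q))
      (m * q - 1))
    rw [← Stmt10aux.Mmat_map ψ _ _ (Stmt10aux.gP_monic hn0)]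
    have h2 : ψ z = 0 := by rw [hψ, eq_intCast]; exact hcast0
    simpa [RingHom.mapMatrix_apply, ← hzdef, h2] using h.symm
  have hmonic := Stmt10aux.gP_map_monic ψ hn0
  have hdeg := Stmt10aux.gP_map_natDegree ψ hn0
  have hfb : (Stmt10aux.fP (m * q)).map ψ
      = C (((Ln (m * q) / q : ℕ) : ZMod q)) * Stmt10aux.hpoly m q ^ q :=
    Stmt10aux.fP_map_zmod hq hm hqm
  have hqq : m * q < q ^ 2 := by
    have h1 : m * q < q * q := (Nat.mul_lt_mul_right hq.pos).2 hqm
    calc m * q < q * q := h1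
    _ = q ^ 2 := (sq q).symm
  have hqLn : q ∣ Ln (m * q) := Stmt10aux.dvd_Ln hq.pos
    (by calc q = 1 * q := (one_mul q).symm
        _ ≤ m * q := Nat.mul_le_mul_right q hm)
  have hu : (((Ln (m * q) / q : ℕ) : ZMod q)) ≠ 0 := by
    rw [Ne, ZMod.natCast_eq_zero_iff]
    intro hdq
    apply Stmt10aux.not_sq_dvd_Ln hq hqq
    obtain ⟨t, ht⟩ := hdq
    have hLn : Ln (m * q) = q * (Ln (m * q) / q) := (Nat.mul_div_cancel' hqLn).symm
    refine ⟨t, ?_⟩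
    rw [hLn, ht, sq]
    ring
  have hcop_h : IsCoprime (Stmt10aux.hpoly m q) ((Stmt10aux.gP (m * q)).map ψ) := by
    rw [← EuclideanDomain.gcd_isUnit_iff]
    set D := EuclideanDomain.gcd (Stmt10aux.hpoly m q) ((Stmt10aux.gP (m * q)).map ψ) with hD
    by_contra hnu
    have hgP0 : (Stmt10aux.gP (m * q)).map ψ ≠ 0 := hmonic.ne_zero
    have hD0 : D ≠ 0 := by
      intro h
      exact hgP0 (EuclideanDomain.gcd_eq_zero_iff.1 h).2
    have hdegD : D.degree ≠ 0 := fun h => hnu (Polynomial.isUnit_iff_degree_eq_zero.2 h)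
    set ρ := algebraMap (ZMod q) (AlgebraicClosure (ZMod q)) with hρ
    have hmapD : (D.map ρ).degree ≠ 0 := by
      rw [Polynomial.degree_map]
      exact hdegD
    obtain ⟨μ, hμ⟩ := IsAlgClosed.exists_root (D.map ρ) hmapD
    have hDh : D ∣ Stmt10aux.hpoly m q := EuclideanDomain.gcd_dvd_left _ _
    have hDg : D ∣ (Stmt10aux.gP (m * q)).map ψ := EuclideanDomain.gcd_dvd_right _ _
    have hhr : (Polynomial.aeval μ) (Stmt10aux.hpoly m q) = 0 := by
      obtain ⟨c, hc⟩ := hDh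
      rw [aeval_def, ← eval_map, hc, Polynomial.map_mul, eval_mul]
      rw [show (D.map ρ).eval μ = 0 from hμ, zero_mul]
    have hgr : Polynomial.eval μ ((((Stmt10aux.gP (m * q)).map ψ)).map ρ) = 0 := by
      obtain ⟨c, hc⟩ := hDg
      rw [hc, Polynomial.map_mul, eval_mul, show (D.map ρ).eval μ = 0 from hμ, zero_mul]
    haveI hKchar : CharP (AlgebraicClosure (ZMod q)) q :=
      charP_of_injective_algebraMap' (ZMod q) q
    have hsum : (∑ i ∈ Finset.range (m * q), μ ^ i) = 0 := by
      have h := hgr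
      rw [Polynomial.map_map] at h
      rw [Stmt10aux.gP_map (ρ.comp ψ) (m * q)] at h
      simpa [eval_finset_sum] using h
    have hμn : μ ^ (m * q) = 1 := by
      have h := geom_sum_mul μ (m * q)
      rw [hsum, zero_mul] at h
      exact sub_eq_zero.1 h.symm
    have hμm : μ ^ m = 1 := by
      have hfrob : (μ ^ m - 1) ^ q = μ ^ (m * q) - 1 ^ q := by
        rw [sub_pow_char, ← pow_mul]
      rw [one_pow, hμn, sub_self] at hfrob
      have h0 : μ ^ m - 1 = 0 := (pow_eq_zero_iff hq.ne_zero).1 hfrob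
      exact sub_eq_zero.1 h0
    exact Stmt10aux.no_common_root hq hm hqm hω hxc hx0 hxval hY1 hY2 μ hμm hhr
  have hcop : IsCoprime ((Stmt10aux.fP (m * q)).map ψ) ((Stmt10aux.gP (m * q)).map ψ) := by
    rw [hfb]
    apply IsCoprime.mul_left
    · refine ⟨C ((((Ln (m * q) / q : ℕ) : ZMod q))⁻¹), 0, ?_⟩
      rw [zero_mul, add_zero, ← C_mul, inv_mul_cancel₀ hu, map_one]
    · exact hcop_h.pow_left
  have hunit := Stmt10aux.Mmat_det_isUnit hmonic hdeg hcop
  exact hunit.ne_zero hdet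
end

section
/- Let n ≥ 8 and let ℓ be a prime with n/2 < ℓ < n−2. Then the integer 𝒫_n = ∏_θ F̃_n(θ), with θ ranging over the nontrivial n-th roots of unity in ℂ, is not divisible by ℓ. -/
open Polynomial BigOperators

/-! ### Auxiliary material -/

/-- The integer version of `Ftilde`. -/
noncomputable def Fz (n : ℕ) : Polynomial ℤ :=
  Polynomial.C ((Ln n : ℤ)) +
    ∑ k ∈ Finset.Icc 1 n, Polynomial.C ((Ln n / k : ℕ) : ℤ) * Polynomial.X ^ k

/-- The cofactor polynomial used in the mod-`ℓ` congruence. -/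
noncomputable def Gz (n ℓ : ℕ) : Polynomial ℤ :=
  Polynomial.C ((Ln n / ℓ : ℕ) : ℤ) +
    ∑ k ∈ (Finset.Icc 1 n).erase ℓ, Polynomial.C ((Ln n / k / ℓ : ℕ) : ℤ) * Polynomial.X ^ k

lemma pow_dvd_of_dvd_lcm {p a : ℕ} (hp : p.Prime) (ha : a ≠ 0) :
    ∀ (s : Finset ℕ), (0:ℕ) ∉ s → p ^ a ∣ s.lcm id → ∃ k ∈ s, p ^ a ∣ k := by
  intro s
  induction s using Finset.induction_on with
  | empty =>
      intro _ h
      simp only [Finset.lcm_empty] at h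
      have h1 : p ^ a = 1 := Nat.dvd_one.mp h
      have h2 : p ≤ p ^ a := Nat.le_self_pow ha p
      have := hp.two_le
      omega
  | insert b t hx ih =>
      intro h0 hdvd
      rw [Finset.lcm_insert] at hdvd
      have hb : b ≠ 0 := fun h => h0 (by simp [h])
      have ht0 : (0:ℕ) ∉ t := fun h => h0 (Finset.mem_insert_of_mem h)
      have htl : t.lcm id ≠ 0 := by
        rw [Ne, Finset.lcm_eq_zero_iff]
        rintro ⟨k, hk, hk0⟩
        simp only [id] at hk0
        subst hk0
        exact ht0 (Finset.mem_coe.1 hk)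
      rw [id, lcm_eq_nat_lcm] at hdvd
      have hlne : Nat.lcm b (t.lcm id) ≠ 0 := Nat.lcm_ne_zero hb htl
      have hle : a ≤ (Nat.lcm b (t.lcm id)).factorization p := by
        rw [← Nat.Prime.pow_dvd_iff_le_factorization hp hlne]
        exact hdvd
      rw [Nat.factorization_lcm hb htl] at hle
      simp only [Finsupp.sup_apply, le_sup_iff] at hle
      rcases hle with h | h
      · exact ⟨b, Finset.mem_insert_self _ _,
          (Nat.Prime.pow_dvd_iff_le_factorization hp hb).2 h⟩
      · obtain ⟨k, hk, hk'⟩ := ih ht0 ((Nat.Prime.pow_dvd_iff_le_factorization hp htl).2 h)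
        exact ⟨k, Finset.mem_insert_of_mem hk, hk'⟩

lemma Fz_map (n : ℕ) : (Fz n).map (Int.castRingHom ℚ) = Ftilde n := by
  rw [Fz, Ftilde, F, mul_add, mul_one, Finset.mul_sum]
  rw [Polynomial.map_add, Polynomial.map_sum]
  congr 1
  · simp
  · refine Finset.sum_congr rfl fun k hk => ?_
    rw [Polynomial.map_mul, Polynomial.map_pow, Polynomial.map_C, Polynomial.map_X,
      ← mul_assoc, ← Polynomial.C_mul]
    have hk1 : (1:ℕ) ≤ k := (Finset.mem_Icc.1 hk).1
    have hd : k ∣ Ln n := Finset.dvd_lcm hk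
    congr 2
    have hkQ : (k : ℚ) ≠ 0 := by
      exact_mod_cast (by omega : k ≠ 0)
    show ((((Ln n / k : ℕ) : ℤ)) : ℚ) = (Ln n : ℚ) * (k : ℚ)⁻¹
    rw [show ((((Ln n / k : ℕ) : ℤ)) : ℚ) = ((Ln n / k : ℕ) : ℚ) from by norm_cast,
      Nat.cast_div hd hkQ, div_eq_mul_inv]

lemma aeval_Fz {A : Type*} [CommRing A] [Algebra ℚ A] (x : A) (n : ℕ) :
    Polynomial.aeval x (Ftilde n) = Polynomial.aeval x (Fz n) := by
  rw [← Fz_map, show (Int.castRingHom ℚ) = algebraMap ℤ ℚ from rfl, aeval_map_algebraMap]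

set_option maxHeartbeats 1000000 in
/-- For `n ≥ 8` and a prime `ℓ` with `n/2 < ℓ < n − 2`, the integer `𝒫 n` is
not divisible by `ℓ`. -/
theorem stmt15 (n ℓ : ℕ) (hn : 8 ≤ n) (hℓ : ℓ.Prime) (h1 : n < 2 * ℓ) (h2 : ℓ < n - 2) :
    ∃ z : ℤ, (z : ℂ) = P n ∧ ¬ ((ℓ : ℤ) ∣ z) := by
  classical
  have hn0 : 0 < n := by omega
  have hℓ2 : 2 ≤ ℓ := hℓ.two_le
  have hmem : ℓ ∈ Finset.Icc 1 n := Finset.mem_Icc.2 ⟨by omega, by omega⟩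
  have hℓL : ℓ ∣ Ln n := Finset.dvd_lcm hmem
  set c : ℕ := Ln n / ℓ with hcdef
  have hcℓ : ℓ * c = Ln n := Nat.mul_div_cancel' hℓL
  -- ℓ does not divide c
  have hnotc : ¬ ℓ ∣ c := by
    intro h
    obtain ⟨m, hm⟩ := h
    have hsq : ℓ ^ 2 ∣ Ln n := ⟨m, by rw [← hcℓ, hm]; ring⟩
    obtain ⟨k, hk, hk2⟩ := pow_dvd_of_dvd_lcm hℓ two_ne_zero (Finset.Icc 1 n)
      (by simp) hsq
    have hkn : k ≤ n := (Finset.mem_Icc.1 hk).2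
    have hk1 : 1 ≤ k := (Finset.mem_Icc.1 hk).1
    have : ℓ ^ 2 ≤ k := Nat.le_of_dvd (by omega) hk2
    nlinarith
  -- for k ≠ ℓ in the range, ℓ divides Ln n / k
  have hdiv : ∀ k ∈ (Finset.Icc 1 n).erase ℓ, ℓ ∣ Ln n / k := by
    intro k hk
    obtain ⟨hne, hkI⟩ := Finset.mem_erase.1 hk
    have hk1 : 1 ≤ k := (Finset.mem_Icc.1 hkI).1
    have hkn : k ≤ n := (Finset.mem_Icc.1 hkI).2
    have hkd : k ∣ Ln n := Finset.dvd_lcm hkI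
    have hnk : ¬ ℓ ∣ k := by
      rintro ⟨m, rfl⟩
      rcases Nat.lt_or_ge m 2 with hm | hm
      · interval_cases m <;> omega
      · nlinarith
    have : ℓ ∣ k * (Ln n / k) := by rw [Nat.mul_div_cancel' hkd]; exact hℓL
    rcases (Nat.Prime.dvd_mul hℓ).1 this with h | h
    · exact absurd h hnk
    · exact h
  -- the key polynomial identity over ℤ
  have hFzeq : Fz n
      = Polynomial.C ((c : ℤ)) * Polynomial.X ^ ℓ + Polynomial.C ((ℓ : ℤ)) * Gz n ℓ := by
    rw [Fz, Gz, mul_add, Finset.mul_sum]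
    rw [← Finset.add_sum_erase _ _ hmem]
    have h1' : Polynomial.C ((ℓ:ℤ)) * Polynomial.C ((c : ℤ)) = Polynomial.C ((Ln n : ℤ)) := by
      rw [← Polynomial.C_mul]
      congr 1
      exact_mod_cast congrArg (Nat.cast : ℕ → ℤ) hcℓ
    have h2' : ∀ k ∈ (Finset.Icc 1 n).erase ℓ,
        Polynomial.C ((ℓ:ℤ)) * (Polynomial.C ((Ln n / k / ℓ : ℕ) : ℤ) * Polynomial.X ^ k)
          = Polynomial.C ((Ln n / k : ℕ) : ℤ) * Polynomial.X ^ k := by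
      intro k hk
      rw [← mul_assoc, ← Polynomial.C_mul]
      congr 2
      exact_mod_cast congrArg (Nat.cast : ℕ → ℤ) (Nat.mul_div_cancel' (hdiv k hk))
    rw [Finset.sum_congr rfl h2', h1']
    ring
  -- set up the cyclotomic field
  set n' : ℕ+ := ⟨n, hn0⟩ with hn'def
  set K := CyclotomicField n' ℚ with hKdef
  haveI : IsCyclotomicExtension {(n' : ℕ)} ℚ K := CyclotomicField.isCyclotomicExtension _ ℚ
  haveI : FiniteDimensional ℚ K := IsCyclotomicExtension.finiteDimensional {(n' : ℕ)} ℚ K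
  haveI : IsGalois ℚ K := IsCyclotomicExtension.isGalois {(n' : ℕ)} ℚ K
  haveI : Algebra.IsAlgebraic ℚ K := Algebra.IsAlgebraic.of_finite ℚ K
  have hζ : IsPrimitiveRoot (IsCyclotomicExtension.zeta n' ℚ K) n :=
    IsCyclotomicExtension.zeta_spec n' ℚ K
  set s : Finset K := (Polynomial.nthRootsFinset n (1 : K)).erase 1 with hsdef
  have hsub : s ⊆ Polynomial.nthRootsFinset n (1 : K) := by
    rw [hsdef]; exact Finset.erase_subset _ _
  -- integrality of the roots of unity
  have hint : ∀ θ ∈ Polynomial.nthRootsFinset n (1 : K), IsIntegral ℤ θ := by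
    intro θ hθ
    have hpow : θ ^ n = 1 := (Polynomial.mem_nthRootsFinset hn0 (1 : K)).1 hθ
    refine ⟨Polynomial.X ^ n - Polynomial.C 1, Polynomial.monic_X_pow_sub_C 1 (by omega), ?_⟩
    simp [hpow]
  have hintC : ∀ (p : Polynomial ℤ), ∀ θ ∈ Polynomial.nthRootsFinset n (1 : K),
      IsIntegral ℤ (Polynomial.aeval θ p) := by
    intro p θ hθ
    refine (mem_integralClosure_iff ℤ K).1
      (Algebra.adjoin_le ?_ (Polynomial.aeval_mem_adjoin_singleton ℤ θ))
    rintro x hx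
    rw [Set.mem_singleton_iff] at hx
    rw [hx]
    exact (mem_integralClosure_iff ℤ K).2 (hint θ hθ)
  -- the product over nontrivial roots, inside K
  set prodK : K := ∏ θ ∈ s, Polynomial.aeval θ (Ftilde n) with hprodKdef
  have hprodFz : prodK = ∏ θ ∈ s, Polynomial.aeval θ (Fz n) :=
    Finset.prod_congr rfl fun θ _ => aeval_Fz θ n
  -- Galois invariance
  have hfix : ∀ σ : K ≃ₐ[ℚ] K, σ prodK = prodK := by
    intro σ
    have himg : s.image σ = s := by
      apply Finset.eq_of_subset_of_card_le
      · intro x hx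
        obtain ⟨θ, hθ, rfl⟩ := Finset.mem_image.1 hx
        obtain ⟨hne, hroot⟩ := Finset.mem_erase.1 (hsdef ▸ hθ)
        rw [hsdef]
        refine Finset.mem_erase.2 ⟨?_, Polynomial.map_mem_nthRootsFinset_one hroot σ⟩
        intro h
        exact hne (σ.injective (by rw [h, map_one]))
      · rw [Finset.card_image_of_injective _ σ.injective]
    calc σ prodK = ∏ θ ∈ s, σ (Polynomial.aeval θ (Ftilde n)) := map_prod _ _ _
      _ = ∏ θ ∈ s, Polynomial.aeval (σ θ) (Ftilde n) :=
          Finset.prod_congr rfl fun θ _ =>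
            (Polynomial.aeval_algHom_apply (σ : K →ₐ[ℚ] K) θ (Ftilde n)).symm
      _ = ∏ θ ∈ s.image σ, Polynomial.aeval θ (Ftilde n) := by
          rw [Finset.prod_image fun a _ b _ h => σ.injective h]
      _ = prodK := by rw [himg]
  -- rationality
  have hmemfix : prodK ∈ IntermediateField.fixedField
      (IntermediateField.fixingSubgroup (⊥ : IntermediateField ℚ K)) := fun g => hfix g
  rw [IsGalois.fixedField_fixingSubgroup ⊥] at hmemfix
  obtain ⟨q, hq⟩ := IntermediateField.mem_bot.1 hmemfix
  -- integrality of the product, hence of q; get the integer z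
  have hprodint : IsIntegral ℤ prodK := by
    rw [hprodFz]
    exact Subalgebra.prod_mem (integralClosure ℤ K) fun θ hθ => hintC (Fz n) θ (hsub hθ)
  have hqint : IsIntegral ℤ q := by
    refine (isIntegral_algebraMap_iff (algebraMap ℚ K).injective).1 ?_
    rw [hq]; exact hprodint
  obtain ⟨z, hz⟩ := IsIntegrallyClosed.isIntegral_iff.1 hqint
  -- cardinality and product of the roots
  have hcard : s.card = n - 1 := by
    rw [hsdef, Finset.card_erase_of_mem (Polynomial.one_mem_nthRootsFinset hn0),
      hζ.card_nthRootsFinset]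
  have hprodroots : (∏ θ ∈ s, θ) = (-1 : K) ^ (n + 1) := by
    have hXn := Polynomial.X_pow_sub_one_eq_prod hn0 hζ
    have heval := congrArg (Polynomial.eval (0 : K)) hXn
    rw [Polynomial.eval_sub, Polynomial.eval_pow, Polynomial.eval_X, Polynomial.eval_one,
      Polynomial.eval_prod] at heval
    simp only [Polynomial.eval_sub, Polynomial.eval_X, Polynomial.eval_C, zero_sub,
      zero_pow (by omega : n ≠ 0)] at heval
    have hneg : ∀ θ ∈ Polynomial.nthRootsFinset n (1 : K), -θ = (-1 : K) * θ := fun θ _ => by ring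
    rw [Finset.prod_congr rfl hneg, Finset.prod_mul_distrib, Finset.prod_const,
      hζ.card_nthRootsFinset] at heval
    have hall : (∏ θ ∈ Polynomial.nthRootsFinset n (1 : K), θ) = ∏ θ ∈ s, θ := by
      rw [hsdef, ← Finset.mul_prod_erase (Polynomial.nthRootsFinset n (1 : K)) (fun θ => θ)
        (Polynomial.one_mem_nthRootsFinset hn0)]
      exact one_mul _
    rw [hall] at heval
    have hsq : (-1 : K) ^ n * (-1 : K) ^ n = 1 := by
      rw [← pow_add]; exact Even.neg_one_pow ⟨n, rfl⟩
    calc (∏ θ ∈ s, θ) = ((-1 : K) ^ n * (-1 : K) ^ n) * ∏ θ ∈ s, θ := by rw [hsq, one_mul]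
      _ = (-1 : K) ^ n * ((-1 : K) ^ n * ∏ θ ∈ s, θ) := by ring
      _ = (-1 : K) ^ n * (-1) := by rw [← heval]
      _ = (-1 : K) ^ (n + 1) := by rw [pow_succ]
  -- the congruence mod ℓ in the ring of integers
  set R := integralClosure ℤ K with hRdef
  set I : Ideal R := Ideal.span {(ℓ : R)} with hIdef
  let A : {x // x ∈ s} → R := fun θ => ⟨Polynomial.aeval θ.1 (Fz n), hintC _ _ (hsub θ.2)⟩
  let T : {x // x ∈ s} → R := fun θ => ⟨θ.1, hint _ (hsub θ.2)⟩
  have hcong : ∀ θ : {x // x ∈ s},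
      Ideal.Quotient.mk I (A θ) = Ideal.Quotient.mk I ((c : R) * T θ ^ ℓ) := by
    intro θ
    rw [Ideal.Quotient.eq]
    refine Ideal.mem_span_singleton.2 ⟨⟨Polynomial.aeval θ.1 (Gz n ℓ), hintC _ _ (hsub θ.2)⟩, ?_⟩
    apply Subtype.ext
    have hk := congrArg (Polynomial.aeval (θ.1 : K)) hFzeq
    simp only [map_add, map_mul, Polynomial.aeval_C, map_pow, Polynomial.aeval_X] at hk
    push_cast
    change Polynomial.aeval θ.1 (Fz n) - (c : K) * θ.1 ^ ℓ = _
    rw [hk]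
    push_cast
    ring
  have hqprod : Ideal.Quotient.mk I (∏ θ ∈ s.attach, A θ)
      = Ideal.Quotient.mk I ((c : R) ^ (n - 1) * (∏ θ ∈ s.attach, T θ) ^ ℓ) := by
    rw [map_prod, Finset.prod_congr rfl (fun θ _ => hcong θ), ← map_prod]
    congr 1
    rw [Finset.prod_mul_distrib, Finset.prod_const, Finset.prod_pow, Finset.card_attach, hcard]
  have hTprod : (∏ θ ∈ s.attach, T θ) = ((-1 : R) ^ (n + 1)) := by
    apply Subtype.ext
    have : ((∏ θ ∈ s.attach, T θ : R) : K) = ∏ θ ∈ s.attach, (θ.1 : K) := by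
      push_cast
      rfl
    rw [this, Finset.prod_attach s (fun x => x), hprodroots]
    push_cast
    ring
  have hε : ((-1 : ↥R) ^ (n + 1)) ^ ℓ = (-1 : ↥R) ^ (n + 1) := by
    have hodd : Odd ℓ := hℓ.odd_of_ne_two (by omega)
    rw [← pow_mul]
    rcases Nat.even_or_odd (n + 1) with he | ho
    · rw [Even.neg_one_pow (he.mul_right ℓ), Even.neg_one_pow he]
    · rw [Odd.neg_one_pow (ho.mul hodd), Odd.neg_one_pow ho]
  rw [hTprod, hε] at hqprod
  rw [Ideal.Quotient.eq] at hqprod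
  obtain ⟨r, hr⟩ := Ideal.mem_span_singleton.1 hqprod
  -- transfer the congruence to K
  have hrK : prodK - (c : K) ^ (n - 1) * (-1 : K) ^ (n + 1) = (ℓ : K) * (r : K) := by
    have h := congrArg ((integralClosure ℤ K).val) hr
    simp only [map_sub, map_mul, map_pow, map_prod, map_natCast, map_neg, map_one] at h
    have e1 : (∏ θ ∈ s.attach, (integralClosure ℤ K).val (A θ))
        = ∏ θ ∈ s, Polynomial.aeval θ (Fz n) :=
      (Finset.prod_congr rfl fun θ _ => rfl).trans
        (Finset.prod_attach s fun x => Polynomial.aeval x (Fz n))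
    rw [e1] at h
    rw [hprodFz]
    exact h
  set w : ℤ := z - (-1) ^ (n + 1) * (c : ℤ) ^ (n - 1) with hwdef
  have hzq : ((z : ℚ)) = q := by exact_mod_cast hz
  have hwK : algebraMap ℚ K ((w : ℚ)) = (ℓ : K) * (r : K) := by
    have hwq : ((w : ℚ)) = (z : ℚ) - (-1) ^ (n + 1) * (c : ℚ) ^ (n - 1) := by
      rw [hwdef]; push_cast; ring
    rw [hwq, map_sub, map_mul, map_pow, map_pow, map_neg, map_one, map_natCast, hzq, hq]
    linear_combination hrK
  have hℓQ : ((ℓ : ℚ)) ≠ 0 := by exact_mod_cast (by omega : ℓ ≠ 0)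
  have hℓK : ((ℓ : K)) ≠ 0 := by
    have : ((ℓ : ℚ)) ≠ 0 := hℓQ
    exact_mod_cast (by exact_mod_cast (by omega : ℓ ≠ 0) : ((ℓ : K)) ≠ 0)
  have hrval : (r : K) = algebraMap ℚ K ((w : ℚ) / (ℓ : ℚ)) := by
    rw [map_div₀, hwK, map_natCast, mul_comm, mul_div_assoc, div_self hℓK, mul_one]
  have hwint : IsIntegral ℤ ((w : ℚ) / (ℓ : ℚ)) := by
    refine (isIntegral_algebraMap_iff (algebraMap ℚ K).injective).1 ?_
    rw [← hrval]
    exact r.2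
  obtain ⟨m, hm⟩ := IsIntegrallyClosed.isIntegral_iff.1 hwint
  have hmw : (w : ℚ) = (ℓ : ℚ) * (m : ℚ) := by
    have : ((m : ℤ) : ℚ) = (w : ℚ) / (ℓ : ℚ) := by exact_mod_cast hm
    field_simp at this
    linarith [this]
  have hwdvd : (ℓ : ℤ) ∣ w := ⟨m, by exact_mod_cast hmw⟩
  -- the complex embedding
  let φ : K →ₐ[ℚ] ℂ := IsAlgClosed.lift
  have hφinj : Function.Injective (φ : K → ℂ) := fun a b h => φ.toRingHom.injective h
  have himgroots : (Polynomial.nthRootsFinset n (1 : K)).image φ = Polynomial.nthRootsFinset n (1 : ℂ) := by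
    apply Finset.eq_of_subset_of_card_le
    · intro x hx
      obtain ⟨θ, hθ, rfl⟩ := Finset.mem_image.1 hx
      exact Polynomial.map_mem_nthRootsFinset_one hθ φ
    · rw [Finset.card_image_of_injective _ hφinj, hζ.card_nthRootsFinset,
        (Complex.isPrimitiveRoot_exp n (by omega)).card_nthRootsFinset]
  have hsimg : s.image φ = (Polynomial.nthRootsFinset n (1 : ℂ)).erase 1 := by
    rw [hsdef, Finset.image_erase hφinj, himgroots, map_one]
  have hzP : ((z : ℤ) : ℂ) = P n := by
    calc ((z : ℤ) : ℂ) = algebraMap ℚ ℂ ((z : ℚ)) := by push_cast; simp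
      _ = φ (algebraMap ℚ K ((z : ℚ))) := (φ.commutes _).symm
      _ = φ prodK := by rw [hzq, hq]
      _ = ∏ θ ∈ s, φ (Polynomial.aeval θ (Ftilde n)) := map_prod _ _ _
      _ = ∏ θ ∈ s, Polynomial.aeval (φ θ) (Ftilde n) :=
          Finset.prod_congr rfl fun θ _ => (Polynomial.aeval_algHom_apply φ θ (Ftilde n)).symm
      _ = ∏ θ ∈ s.image φ, Polynomial.aeval θ (Ftilde n) := by
          rw [Finset.prod_image fun a _ b _ h => hφinj h]
      _ = P n := by rw [hsimg, P]
  refine ⟨z, hzP, ?_⟩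
  intro hdz
  have hd1 : (ℓ : ℤ) ∣ (-1) ^ (n + 1) * (c : ℤ) ^ (n - 1) := by
    have := dvd_sub hdz hwdvd
    simpa [hwdef] using this
  have hsqZ : ((-1 : ℤ) ^ (n + 1)) * ((-1 : ℤ) ^ (n + 1)) = 1 := by
    rw [← pow_add]; exact Even.neg_one_pow ⟨n + 1, rfl⟩
  have hd2 : (ℓ : ℤ) ∣ (c : ℤ) ^ (n - 1) := by
    have h3 : (c : ℤ) ^ (n - 1) = (-1) ^ (n + 1) * ((-1) ^ (n + 1) * (c : ℤ) ^ (n - 1)) := by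
      rw [← mul_assoc, hsqZ, one_mul]
    rw [h3]
    exact Dvd.dvd.mul_left hd1 _
  have hp : Prime ((ℓ : ℤ)) := Nat.prime_iff_prime_int.mp hℓ
  have hd3 : (ℓ : ℤ) ∣ (c : ℤ) := hp.dvd_of_dvd_pow hd2
  exact hnotc (Int.natCast_dvd_natCast.mp (by exact_mod_cast hd3))
end
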